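/- arXiv:1708.07475 — 3 statements merged into one kernel-verified Lean document; each statement's English description precedes it below -/
import Mathlib

section
/- Let R be a commutative ring and A a commutative Hopf algebra over R, and suppose A is infinitesimally flat, i.e. the R-module I/I² is finitely presented and projective (equivalently, finitely generated and projective), where I = ker ε is the augmentation ideal. Let 𝔇_r ⊆ Der_R(A) be the R-submodule of right-invariant derivations and 𝔇_l ⊆ Der_R(A) the R-submodule of left-invariant derivations. Then the A-linear map A ⊗_R 𝔇_r → Der_R(A) induced by the bilinear map (a, ξ) ↦ a·ξ is bijective, and likewise the A-linear map A ⊗_R 𝔇_l → Der_R(A), (a, ξ) ↦ a·ξ, is bijective. -/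
open TensorProduct

noncomputable section
section

variable (R A : Type*) [CommRing R] [CommRing A] [HopfAlgebra R A]

/-- The `R`-submodule of `Der_R(A)` consisting of the left-invariant derivations, i.e. those
`ξ` with `Δ ∘ ξ = (id_A ⊗ ξ) ∘ Δ`. -/
def leftInvariantDerivations : Submodule R (Derivation R A A) where
  carrier := {ξ | Coalgebra.comul (R := R) ∘ₗ (ξ : A →ₗ[R] A) =
    LinearMap.lTensor A (ξ : A →ₗ[R] A) ∘ₗ Coalgebra.comul}
  add_mem' := by
    intro ξ η hξ hη
    simp only [Set.mem_setOf_eq, Derivation.coe_add_linearMap, LinearMap.comp_add,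
      LinearMap.lTensor_add, LinearMap.add_comp] at *
    rw [hξ, hη]
  zero_mem' := by
    simp only [Set.mem_setOf_eq, Derivation.coe_zero_linearMap, LinearMap.comp_zero,
      LinearMap.lTensor_zero, LinearMap.zero_comp]
  smul_mem' := by
    intro r ξ hξ
    simp only [Set.mem_setOf_eq, Derivation.coe_smul_linearMap, LinearMap.comp_smul,
      LinearMap.lTensor_smul, LinearMap.smul_comp] at *
    rw [hξ]

/-- The `R`-submodule of `Der_R(A)` consisting of the right-invariant derivations, i.e. those
`ξ` with `Δ ∘ ξ = (ξ ⊗ id_A) ∘ Δ`. -/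
def rightInvariantDerivations : Submodule R (Derivation R A A) where
  carrier := {ξ | Coalgebra.comul (R := R) ∘ₗ (ξ : A →ₗ[R] A) =
    LinearMap.rTensor A (ξ : A →ₗ[R] A) ∘ₗ Coalgebra.comul}
  add_mem' := by
    intro ξ η hξ hη
    simp only [Set.mem_setOf_eq, Derivation.coe_add_linearMap, LinearMap.comp_add,
      LinearMap.rTensor_add, LinearMap.add_comp] at *
    rw [hξ, hη]
  zero_mem' := by
    simp only [Set.mem_setOf_eq, Derivation.coe_zero_linearMap, LinearMap.comp_zero,
      LinearMap.rTensor_zero, LinearMap.zero_comp]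
  smul_mem' := by
    intro r ξ hξ
    simp only [Set.mem_setOf_eq, Derivation.coe_smul_linearMap, LinearMap.comp_smul,
      LinearMap.rTensor_smul, LinearMap.smul_comp] at *
    rw [hξ]

/-- The `R`-linear map `A ⊗_R p → Der_R(A)` induced by the bilinear map `(a, ξ) ↦ a·ξ`, for an
`R`-submodule `p` of the `A`-module `Der_R(A)`. -/
def derivationSMulLift (p : Submodule R (Derivation R A A)) :
    A ⊗[R] p →ₗ[R] Derivation R A A :=
  TensorProduct.lift
    { toFun := fun a =>
        { toFun := fun ξ => a • (ξ : Derivation R A A)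
          map_add' := fun ξ η => by simp [smul_add]
          map_smul' := fun r ξ => by simp [smul_comm r a] }
      map_add' := fun a b => by ext ξ; simp [add_smul]
      map_smul' := fun r a => by ext ξ; simp [smul_assoc] }

end


namespace Statement4Aux

open Coalgebra HopfAlgebra



section Conv

variable {R : Type*} [CommRing R] {A : Type*} [CommRing A] [Algebra R A]
variable {C : Type*} [AddCommGroup C] [Module R C]

/-- Convolution product of two linear maps with respect to comultiplication data `dC`. -/
def conv (dC : C →ₗ[R] C ⊗[R] C) (f g : C →ₗ[R] A) : C →ₗ[R] A :=
  LinearMap.mul' R A ∘ₗ TensorProduct.map f g ∘ₗ dC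

lemma conv_assoc (dC : C →ₗ[R] C ⊗[R] C)
    (hco : (TensorProduct.assoc R C C C).toLinearMap ∘ₗ dC.rTensor C ∘ₗ dC = dC.lTensor C ∘ₗ dC)
    (f g h : C →ₗ[R] A) :
    conv dC (conv dC f g) h = conv dC f (conv dC g h) := by
  unfold conv
  have e1 : TensorProduct.map (LinearMap.mul' R A ∘ₗ TensorProduct.map f g ∘ₗ dC) h
      = TensorProduct.map (LinearMap.mul' R A) h ∘ₗ (TensorProduct.map f g).rTensor C
        ∘ₗ dC.rTensor C := by
    rw [LinearMap.rTensor, LinearMap.rTensor, ← TensorProduct.map_comp, ← TensorProduct.map_comp]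
    simp
  have e2 : TensorProduct.map f (LinearMap.mul' R A ∘ₗ TensorProduct.map g h ∘ₗ dC)
      = TensorProduct.map f (LinearMap.mul' R A) ∘ₗ (TensorProduct.map g h).lTensor C
        ∘ₗ dC.lTensor C := by
    rw [LinearMap.lTensor, LinearMap.lTensor, ← TensorProduct.map_comp, ← TensorProduct.map_comp]
    simp
  have key : LinearMap.mul' R A ∘ₗ TensorProduct.map (LinearMap.mul' R A) h
        ∘ₗ (TensorProduct.map f g).rTensor C
      = LinearMap.mul' R A ∘ₗ TensorProduct.map f (LinearMap.mul' R A)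
        ∘ₗ (TensorProduct.map g h).lTensor C ∘ₗ (TensorProduct.assoc R C C C).toLinearMap := by
    ext x y z
    simp [mul_assoc]
  calc LinearMap.mul' R A ∘ₗ TensorProduct.map (LinearMap.mul' R A ∘ₗ TensorProduct.map f g ∘ₗ dC) h ∘ₗ dC
      = (LinearMap.mul' R A ∘ₗ TensorProduct.map (LinearMap.mul' R A) h
          ∘ₗ (TensorProduct.map f g).rTensor C) ∘ₗ (dC.rTensor C ∘ₗ dC) := by
        rw [e1]; rfl
    _ = (LinearMap.mul' R A ∘ₗ TensorProduct.map f (LinearMap.mul' R A)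
          ∘ₗ (TensorProduct.map g h).lTensor C) ∘ₗ
          ((TensorProduct.assoc R C C C).toLinearMap ∘ₗ dC.rTensor C ∘ₗ dC) := by
        rw [key]; rfl
    _ = (LinearMap.mul' R A ∘ₗ TensorProduct.map f (LinearMap.mul' R A)
          ∘ₗ (TensorProduct.map g h).lTensor C) ∘ₗ (dC.lTensor C ∘ₗ dC) := by rw [hco]
    _ = LinearMap.mul' R A ∘ₗ TensorProduct.map f (LinearMap.mul' R A ∘ₗ TensorProduct.map g h ∘ₗ dC) ∘ₗ dC := by
        rw [e2]; rfl

lemma conv_unit_left (dC : C →ₗ[R] C ⊗[R] C) (eC : C →ₗ[R] R)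
    (hleft : eC.rTensor C ∘ₗ dC = TensorProduct.mk R R C 1) (f : C →ₗ[R] A) :
    conv dC (Algebra.linearMap R A ∘ₗ eC) f = f := by
  unfold conv
  have e1 : TensorProduct.map (Algebra.linearMap R A ∘ₗ eC) f
      = TensorProduct.map (Algebra.linearMap R A) f ∘ₗ eC.rTensor C := by
    rw [LinearMap.rTensor, ← TensorProduct.map_comp]
    simp
  rw [e1, LinearMap.comp_assoc, hleft]
  ext c
  simp [Algebra.smul_def]

lemma conv_unit_right (dC : C →ₗ[R] C ⊗[R] C) (eC : C →ₗ[R] R)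
    (hright : eC.lTensor C ∘ₗ dC = (TensorProduct.mk R C R).flip 1) (f : C →ₗ[R] A) :
    conv dC f (Algebra.linearMap R A ∘ₗ eC) = f := by
  unfold conv
  have e1 : TensorProduct.map f (Algebra.linearMap R A ∘ₗ eC)
      = TensorProduct.map f (Algebra.linearMap R A) ∘ₗ eC.lTensor C := by
    rw [LinearMap.lTensor, ← TensorProduct.map_comp]
    simp
  rw [e1, LinearMap.comp_assoc, hright]
  ext c
  simp [Algebra.smul_def, mul_comm]

end Conv



section TensorSquare

variable {R A : Type*} [CommRing R] [CommRing A] [HopfAlgebra R A]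

/-- Comultiplication on `A ⊗ A`. -/
def comul₂ : A ⊗[R] A →ₗ[R] (A ⊗[R] A) ⊗[R] (A ⊗[R] A) :=
  (TensorProduct.tensorTensorTensorComm R A A A A).toLinearMap ∘ₗ
    TensorProduct.map Coalgebra.comul Coalgebra.comul

/-- Counit on `A ⊗ A`. -/
def counit₂ : A ⊗[R] A →ₗ[R] R :=
  LinearMap.mul' R R ∘ₗ TensorProduct.map Coalgebra.counit Coalgebra.counit

@[simp] lemma counit₂_tmul (a b : A) :
    counit₂ (R := R) (a ⊗ₜ b) = Coalgebra.counit a * Coalgebra.counit b := by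
  simp [counit₂]

lemma comul₂_tmul {ι κ : Type*} (a b : A) (ra : Coalgebra.Repr R a ι) (rb : Coalgebra.Repr R b κ) :
    comul₂ (R := R) (a ⊗ₜ b) = ∑ i ∈ ra.index, ∑ j ∈ rb.index,
      (ra.left i ⊗ₜ rb.left j) ⊗ₜ[R] (ra.right i ⊗ₜ rb.right j) := by
  unfold comul₂
  simp only [LinearMap.comp_apply, TensorProduct.map_tmul, ← ra.eq, ← rb.eq]
  rw [TensorProduct.sum_tmul]
  simp [TensorProduct.tmul_sum]

/-- Shuffle `(A⊗(A⊗A))⊗(A⊗(A⊗A)) → (A⊗A)⊗((A⊗A)⊗(A⊗A))`. -/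
def shuffle : (A ⊗[R] (A ⊗[R] A)) ⊗[R] (A ⊗[R] (A ⊗[R] A)) →ₗ[R]
    (A ⊗[R] A) ⊗[R] ((A ⊗[R] A) ⊗[R] (A ⊗[R] A)) :=
  (TensorProduct.map LinearMap.id
      (TensorProduct.tensorTensorTensorComm R A A A A).toLinearMap) ∘ₗ
    (TensorProduct.tensorTensorTensorComm R A (A ⊗[R] A) A (A ⊗[R] A)).toLinearMap

@[simp] lemma shuffle_tmul (p q r p' q' r' : A) :
    shuffle (R := R) ((p ⊗ₜ (q ⊗ₜ r)) ⊗ₜ (p' ⊗ₜ (q' ⊗ₜ r'))) =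
      (p ⊗ₜ p') ⊗ₜ ((q ⊗ₜ q') ⊗ₜ[R] (r ⊗ₜ r')) := by
  simp [shuffle]

lemma coassoc₂ :
    (TensorProduct.assoc R (A ⊗[R] A) (A ⊗[R] A) (A ⊗[R] A)).toLinearMap ∘ₗ
      (comul₂ (R := R) (A := A)).rTensor (A ⊗[R] A) ∘ₗ comul₂
    = (comul₂ (R := R) (A := A)).lTensor (A ⊗[R] A) ∘ₗ comul₂ := by
  apply TensorProduct.ext'
  intro a b
  classical
  set ra := ℛ R a with hra
  set rb := ℛ R b with hrb
  set rx : ∀ i, Coalgebra.Repr R (ra.left i) (A × A) := fun i => ℛ R (ra.left i) with hrx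
  set ry : ∀ i, Coalgebra.Repr R (ra.right i) (A × A) := fun i => ℛ R (ra.right i) with hry
  set rs : ∀ j, Coalgebra.Repr R (rb.left j) (A × A) := fun j => ℛ R (rb.left j) with hrs
  set rt : ∀ j, Coalgebra.Repr R (rb.right j) (A × A) := fun j => ℛ R (rb.right j) with hrt
  have key := congrArg₂ (fun p q => shuffle (R := R) (A := A) (p ⊗ₜ q))
    (Coalgebra.sum_tmul_tmul_eq ra rx ry) (Coalgebra.sum_tmul_tmul_eq rb rs rt)
  simp only [TensorProduct.sum_tmul] at key
  simp only [TensorProduct.tmul_sum] at key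
  simp only [map_sum, shuffle_tmul] at key
  have lhs : (TensorProduct.assoc R (A ⊗[R] A) (A ⊗[R] A) (A ⊗[R] A)).toLinearMap
      ((comul₂ (R := R) (A := A)).rTensor (A ⊗[R] A) (comul₂ (a ⊗ₜ b)))
      = ∑ i ∈ ra.index, ∑ j ∈ rb.index, ∑ k ∈ (rx i).index, ∑ l ∈ (rs j).index,
          ((rx i).left k ⊗ₜ (rs j).left l) ⊗ₜ
            (((rx i).right k ⊗ₜ (rs j).right l) ⊗ₜ[R] (ra.right i ⊗ₜ rb.right j)) := by
    rw [comul₂_tmul a b ra rb]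
    simp only [map_sum, LinearMap.rTensor_tmul]
    refine Finset.sum_congr rfl fun i _ => Finset.sum_congr rfl fun j _ => ?_
    rw [comul₂_tmul _ _ (rx i) (rs j)]
    simp only [TensorProduct.sum_tmul, map_sum, LinearEquiv.coe_coe, TensorProduct.assoc_tmul]
  have rhs : (comul₂ (R := R) (A := A)).lTensor (A ⊗[R] A) (comul₂ (a ⊗ₜ b))
      = ∑ i ∈ ra.index, ∑ j ∈ rb.index, ∑ k ∈ (ry i).index, ∑ l ∈ (rt j).index,
          (ra.left i ⊗ₜ rb.left j) ⊗ₜ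
            (((ry i).left k ⊗ₜ (rt j).left l) ⊗ₜ[R] ((ry i).right k ⊗ₜ (rt j).right l)) := by
    rw [comul₂_tmul a b ra rb]
    simp only [map_sum, LinearMap.lTensor_tmul]
    refine Finset.sum_congr rfl fun i _ => Finset.sum_congr rfl fun j _ => ?_
    rw [comul₂_tmul _ _ (ry i) (rt j)]
    simp only [TensorProduct.tmul_sum]
  simp only [LinearMap.comp_apply]
  rw [lhs, rhs]
  calc ∑ i ∈ ra.index, ∑ j ∈ rb.index, ∑ k ∈ (rx i).index, ∑ l ∈ (rs j).index,
          ((rx i).left k ⊗ₜ (rs j).left l) ⊗ₜ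
            (((rx i).right k ⊗ₜ (rs j).right l) ⊗ₜ[R] (ra.right i ⊗ₜ rb.right j))
      = ∑ i ∈ ra.index, ∑ k ∈ (rx i).index, ∑ j ∈ rb.index, ∑ l ∈ (rs j).index,
          ((rx i).left k ⊗ₜ (rs j).left l) ⊗ₜ
            (((rx i).right k ⊗ₜ (rs j).right l) ⊗ₜ[R] (ra.right i ⊗ₜ rb.right j)) :=
        Finset.sum_congr rfl fun i _ => Finset.sum_comm
    _ = ∑ i ∈ ra.index, ∑ k ∈ (ry i).index, ∑ j ∈ rb.index, ∑ l ∈ (rt j).index,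
          (ra.left i ⊗ₜ rb.left j) ⊗ₜ
            (((ry i).left k ⊗ₜ (rt j).left l) ⊗ₜ[R] ((ry i).right k ⊗ₜ (rt j).right l)) := key
    _ = ∑ i ∈ ra.index, ∑ j ∈ rb.index, ∑ k ∈ (ry i).index, ∑ l ∈ (rt j).index,
          (ra.left i ⊗ₜ rb.left j) ⊗ₜ
            (((ry i).left k ⊗ₜ (rt j).left l) ⊗ₜ[R] ((ry i).right k ⊗ₜ (rt j).right l)) :=
        Finset.sum_congr rfl fun i _ => Finset.sum_comm

end TensorSquare



noncomputable section Antipode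

open HopfAlgebra

variable {R A : Type*} [CommRing R] [CommRing A] [HopfAlgebra R A]

lemma counit₂_left :
    (counit₂ (R := R) (A := A)).rTensor (A ⊗[R] A) ∘ₗ comul₂
      = TensorProduct.mk R R (A ⊗[R] A) 1 := by
  apply TensorProduct.ext'
  intro a b
  set ra := ℛ R a
  set rb := ℛ R b
  have key := congrArg₂ (fun p q =>
      (TensorProduct.map (LinearMap.mul' R R) (LinearMap.id (R := R) (M := A ⊗[R] A)) ∘ₗ
        (TensorProduct.tensorTensorTensorComm R R A R A).toLinearMap) (p ⊗ₜ q))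
    (Coalgebra.sum_counit_tmul_eq ra) (Coalgebra.sum_counit_tmul_eq rb)
  simp only [TensorProduct.sum_tmul] at key
  simp only [TensorProduct.tmul_sum] at key
  simp only [map_sum, LinearMap.comp_apply, LinearEquiv.coe_coe,
    TensorProduct.tensorTensorTensorComm_tmul, TensorProduct.map_tmul,
    LinearMap.mul'_apply, LinearMap.id_coe, id_eq, one_mul] at key
  simp only [LinearMap.comp_apply, LinearMap.rTensor_tmul, TensorProduct.mk_apply]
  rw [comul₂_tmul a b ra rb]
  simp only [map_sum, LinearMap.rTensor_tmul, counit₂_tmul]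
  exact key

lemma counit₂_right :
    (counit₂ (R := R) (A := A)).lTensor (A ⊗[R] A) ∘ₗ comul₂
      = (TensorProduct.mk R (A ⊗[R] A) R).flip 1 := by
  apply TensorProduct.ext'
  intro a b
  set ra := ℛ R a
  set rb := ℛ R b
  have key := congrArg₂ (fun p q =>
      (TensorProduct.map (LinearMap.id (R := R) (M := A ⊗[R] A)) (LinearMap.mul' R R) ∘ₗ
        (TensorProduct.tensorTensorTensorComm R A R A R).toLinearMap) (p ⊗ₜ q))
    (Coalgebra.sum_tmul_counit_eq ra) (Coalgebra.sum_tmul_counit_eq rb)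
  simp only [TensorProduct.sum_tmul] at key
  simp only [TensorProduct.tmul_sum] at key
  simp only [map_sum, LinearMap.comp_apply, LinearEquiv.coe_coe,
    TensorProduct.tensorTensorTensorComm_tmul, TensorProduct.map_tmul,
    LinearMap.mul'_apply, LinearMap.id_coe, id_eq, one_mul] at key
  simp only [LinearMap.comp_apply, LinearMap.flip_apply, TensorProduct.mk_apply]
  rw [comul₂_tmul a b ra rb]
  simp only [map_sum, LinearMap.lTensor_tmul, counit₂_tmul]
  exact key

/-- Product of two representations. -/
def reprMul {ι κ : Type*} {a b : A} (ra : Coalgebra.Repr R a ι) (rb : Coalgebra.Repr R b κ) :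
    Coalgebra.Repr R (a * b) (ι × κ) where
  index := ra.index ×ˢ rb.index
  left := fun p => ra.left p.1 * rb.left p.2
  right := fun p => ra.right p.1 * rb.right p.2
  eq := by
    rw [Bialgebra.comul_mul, ← ra.eq, ← rb.eq, Finset.sum_mul_sum]
    rw [Finset.sum_product]
    simp [Algebra.TensorProduct.tmul_mul_tmul]

lemma h1_conv :
    conv (comul₂ (R := R) (A := A)) (LinearMap.mul' R A)
        (antipode (R := R) ∘ₗ LinearMap.mul' R A)
      = Algebra.linearMap R A ∘ₗ counit₂ := by
  apply TensorProduct.ext'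
  intro a b
  set ra := ℛ R a
  set rb := ℛ R b
  simp only [conv, LinearMap.comp_apply]
  rw [comul₂_tmul a b ra rb]
  simp only [map_sum, TensorProduct.map_tmul, LinearMap.comp_apply, LinearMap.mul'_apply,
    counit₂_tmul]
  have := HopfAlgebra.sum_mul_antipode_eq_smul (R := R) (reprMul ra rb)
  simp only [reprMul] at this
  rw [Finset.sum_product] at this
  rw [this, ← Bialgebra.counit_mul, Algebra.smul_def, mul_one]
  rfl

lemma h2_conv :
    conv (comul₂ (R := R) (A := A))
        (LinearMap.mul' R A ∘ₗ TensorProduct.map (antipode (R := R)) (antipode (R := R)))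
        (LinearMap.mul' R A)
      = Algebra.linearMap R A ∘ₗ counit₂ := by
  apply TensorProduct.ext'
  intro a b
  set ra := ℛ R a
  set rb := ℛ R b
  simp only [conv, LinearMap.comp_apply]
  rw [comul₂_tmul a b ra rb]
  simp only [map_sum, TensorProduct.map_tmul, LinearMap.comp_apply, LinearMap.mul'_apply,
    counit₂_tmul]
  have ea := HopfAlgebra.sum_antipode_mul_eq_smul (R := R) ra
  have eb := HopfAlgebra.sum_antipode_mul_eq_smul (R := R) rb
  calc ∑ i ∈ ra.index, ∑ j ∈ rb.index,
        antipode (R := R) (ra.left i) * antipode (R := R) (rb.left j) *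
          (ra.right i * rb.right j)
      = (∑ i ∈ ra.index, antipode (R := R) (ra.left i) * ra.right i) *
        (∑ j ∈ rb.index, antipode (R := R) (rb.left j) * rb.right j) := by
        rw [Finset.sum_mul_sum]
        refine Finset.sum_congr rfl fun i _ => Finset.sum_congr rfl fun j _ => ?_
        ring
    _ = (Coalgebra.counit a * Coalgebra.counit b) • (1 : A) := by
        rw [ea, eb, smul_mul_smul_comm, mul_one]
    _ = Algebra.linearMap R A (Coalgebra.counit a * Coalgebra.counit b) := by
        rw [Algebra.smul_def, mul_one]; rfl

theorem antipode_mul_linearMap :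
    LinearMap.mul' R A ∘ₗ TensorProduct.map (antipode (R := R)) (antipode (R := R))
      = antipode (R := R) ∘ₗ LinearMap.mul' R A := by
  have u1 := conv_unit_right (R := R) (A := A) (C := A ⊗[R] A) comul₂ counit₂ counit₂_right
      (LinearMap.mul' R A ∘ₗ TensorProduct.map (antipode (R := R)) (antipode (R := R)))
  have u2 := conv_unit_left (R := R) (A := A) (C := A ⊗[R] A) comul₂ counit₂ counit₂_left
      (antipode (R := R) ∘ₗ LinearMap.mul' R A)
  have as := conv_assoc (R := R) (A := A) (C := A ⊗[R] A) comul₂ coassoc₂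
      (LinearMap.mul' R A ∘ₗ TensorProduct.map (antipode (R := R)) (antipode (R := R)))
      (LinearMap.mul' R A) (antipode (R := R) ∘ₗ LinearMap.mul' R A)
  rw [← u1, ← h1_conv, ← as, h2_conv]
  exact u2

theorem antipode_mul (a b : A) :
    antipode (R := R) (a * b) = antipode (R := R) a * antipode (R := R) b := by
  have := LinearMap.congr_fun (antipode_mul_linearMap (R := R) (A := A)) (a ⊗ₜ[R] b)
  simpa using this.symm

end Antipode




variable {R A : Type*} [CommRing R] [CommRing A] [HopfAlgebra R A]

/-- `a ↦ Σ a₁ g(a₂)`. -/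
def opL (g : A →ₗ[R] A) : A →ₗ[R] A :=
  LinearMap.mul' R A ∘ₗ g.lTensor A ∘ₗ Coalgebra.comul

/-- `a ↦ Σ g(a₁) a₂`. -/
def opR (g : A →ₗ[R] A) : A →ₗ[R] A :=
  LinearMap.mul' R A ∘ₗ g.rTensor A ∘ₗ Coalgebra.comul

/-- `a ↦ Σ σ(a₁) ξ(a₂)`. -/
def opGl (ξ : A →ₗ[R] A) : A →ₗ[R] A :=
  LinearMap.mul' R A ∘ₗ (antipode (R := R)).rTensor A ∘ₗ ξ.lTensor A ∘ₗ Coalgebra.comul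

/-- `a ↦ Σ ξ(a₁) σ(a₂)`. -/
def opGr (ξ : A →ₗ[R] A) : A →ₗ[R] A :=
  LinearMap.mul' R A ∘ₗ (antipode (R := R)).lTensor A ∘ₗ ξ.rTensor A ∘ₗ Coalgebra.comul

lemma opL_repr (g : A →ₗ[R] A) {ι : Type*} {a : A} (ra : Coalgebra.Repr R a ι) :
    opL g a = ∑ i ∈ ra.index, ra.left i * g (ra.right i) := by
  simp only [opL, LinearMap.comp_apply, ← ra.eq, map_sum, LinearMap.lTensor_tmul,
    LinearMap.mul'_apply]

lemma opR_repr (g : A →ₗ[R] A) {ι : Type*} {a : A} (ra : Coalgebra.Repr R a ι) :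
    opR g a = ∑ i ∈ ra.index, g (ra.left i) * ra.right i := by
  simp only [opR, LinearMap.comp_apply, ← ra.eq, map_sum, LinearMap.rTensor_tmul,
    LinearMap.mul'_apply]

lemma opGl_repr (ξ : A →ₗ[R] A) {ι : Type*} {a : A} (ra : Coalgebra.Repr R a ι) :
    opGl ξ a = ∑ i ∈ ra.index, antipode (R := R) (ra.left i) * ξ (ra.right i) := by
  simp only [opGl, LinearMap.comp_apply, ← ra.eq, map_sum, LinearMap.lTensor_tmul,
    LinearMap.rTensor_tmul, LinearMap.mul'_apply]

lemma opGr_repr (ξ : A →ₗ[R] A) {ι : Type*} {a : A} (ra : Coalgebra.Repr R a ι) :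
    opGr ξ a = ∑ i ∈ ra.index, ξ (ra.left i) * antipode (R := R) (ra.right i) := by
  simp only [opGr, LinearMap.comp_apply, ← ra.eq, map_sum, LinearMap.lTensor_tmul,
    LinearMap.rTensor_tmul, LinearMap.mul'_apply]

/-- Multiply three factors after applying three maps. -/
def mul₃ (f g h : A →ₗ[R] A) : A ⊗[R] (A ⊗[R] A) →ₗ[R] A :=
  LinearMap.mul' R A ∘ₗ (LinearMap.mul' R A).lTensor A ∘ₗ
    TensorProduct.map f (TensorProduct.map g h)

@[simp] lemma mul₃_tmul (f g h : A →ₗ[R] A) (x y z : A) :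
    mul₃ f g h (x ⊗ₜ (y ⊗ₜ z)) = f x * (g y * h z) := by
  simp [mul₃]

lemma repr_sum_counit_smul_right {ι : Type*} {a : A} (ra : Coalgebra.Repr R a ι) :
    ∑ i ∈ ra.index, counit (R := R) (ra.left i) • ra.right i = a := by
  have h := congrArg (TensorProduct.lid R A) (Coalgebra.sum_counit_tmul_eq ra)
  rw [map_sum] at h
  simp only [TensorProduct.lid_tmul, one_smul] at h
  exact h

lemma repr_sum_counit_smul_left {ι : Type*} {a : A} (ra : Coalgebra.Repr R a ι) :
    ∑ i ∈ ra.index, counit (R := R) (ra.right i) • ra.left i = a := by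
  have h := congrArg (TensorProduct.rid R A) (Coalgebra.sum_tmul_counit_eq ra)
  rw [map_sum] at h
  simp only [TensorProduct.rid_tmul, one_smul] at h
  exact h

lemma opL_opGl (ξ : A →ₗ[R] A) : opL (opGl ξ) = ξ := by
  apply LinearMap.ext; intro a
  set ra := ℛ R a
  set rx : ∀ i, Coalgebra.Repr R (ra.left i) (A × A) := fun i => ℛ R (ra.left i)
  set ry : ∀ i, Coalgebra.Repr R (ra.right i) (A × A) := fun i => ℛ R (ra.right i)
  have key := congrArg (mul₃ (LinearMap.id) (antipode (R := R)) ξ)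
    (Coalgebra.sum_tmul_tmul_eq ra rx ry)
  simp only [map_sum, mul₃_tmul, LinearMap.id_coe, id_eq] at key
  calc opL (opGl ξ) a = ∑ i ∈ ra.index, ra.left i * opGl ξ (ra.right i) := opL_repr _ ra
    _ = ∑ i ∈ ra.index, ∑ k ∈ (ry i).index,
          ra.left i * (antipode (R := R) ((ry i).left k) * ξ ((ry i).right k)) := by
        refine Finset.sum_congr rfl fun i _ => ?_
        rw [opGl_repr ξ (ry i), Finset.mul_sum]
    _ = ∑ i ∈ ra.index, ∑ k ∈ (rx i).index,
          (rx i).left k * (antipode (R := R) ((rx i).right k) * ξ (ra.right i)) := key.symm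
    _ = ∑ i ∈ ra.index,
          (∑ k ∈ (rx i).index, (rx i).left k * antipode (R := R) ((rx i).right k)) *
            ξ (ra.right i) := by
        refine Finset.sum_congr rfl fun i _ => ?_
        rw [Finset.sum_mul]
        exact Finset.sum_congr rfl fun k _ => (mul_assoc _ _ _).symm
    _ = ∑ i ∈ ra.index, counit (R := R) (ra.left i) • ξ (ra.right i) := by
        refine Finset.sum_congr rfl fun i _ => ?_
        rw [HopfAlgebra.sum_mul_antipode_eq_smul (rx i), smul_mul_assoc, one_mul]
    _ = ξ (∑ i ∈ ra.index, counit (R := R) (ra.left i) • ra.right i) := by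
        rw [map_sum]
        exact Finset.sum_congr rfl fun i _ => (map_smul ξ _ _).symm
    _ = ξ a := by rw [repr_sum_counit_smul_right ra]

lemma opGl_opL (g : A →ₗ[R] A) : opGl (opL g) = g := by
  apply LinearMap.ext; intro a
  set ra := ℛ R a
  set rx : ∀ i, Coalgebra.Repr R (ra.left i) (A × A) := fun i => ℛ R (ra.left i)
  set ry : ∀ i, Coalgebra.Repr R (ra.right i) (A × A) := fun i => ℛ R (ra.right i)
  have key := congrArg (mul₃ (antipode (R := R)) (LinearMap.id) g)
    (Coalgebra.sum_tmul_tmul_eq ra rx ry)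
  simp only [map_sum, mul₃_tmul, LinearMap.id_coe, id_eq] at key
  calc opGl (opL g) a
      = ∑ i ∈ ra.index, antipode (R := R) (ra.left i) * opL g (ra.right i) := opGl_repr _ ra
    _ = ∑ i ∈ ra.index, ∑ k ∈ (ry i).index,
          antipode (R := R) (ra.left i) * ((ry i).left k * g ((ry i).right k)) := by
        refine Finset.sum_congr rfl fun i _ => ?_
        rw [opL_repr g (ry i), Finset.mul_sum]
    _ = ∑ i ∈ ra.index, ∑ k ∈ (rx i).index,
          antipode (R := R) ((rx i).left k) * ((rx i).right k * g (ra.right i)) := key.symm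
    _ = ∑ i ∈ ra.index,
          (∑ k ∈ (rx i).index, antipode (R := R) ((rx i).left k) * (rx i).right k) *
            g (ra.right i) := by
        refine Finset.sum_congr rfl fun i _ => ?_
        rw [Finset.sum_mul]
        exact Finset.sum_congr rfl fun k _ => (mul_assoc _ _ _).symm
    _ = ∑ i ∈ ra.index, counit (R := R) (ra.left i) • g (ra.right i) := by
        refine Finset.sum_congr rfl fun i _ => ?_
        rw [HopfAlgebra.sum_antipode_mul_eq_smul (rx i), smul_mul_assoc, one_mul]
    _ = g (∑ i ∈ ra.index, counit (R := R) (ra.left i) • ra.right i) := by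
        rw [map_sum]
        exact Finset.sum_congr rfl fun i _ => (map_smul g _ _).symm
    _ = g a := by rw [repr_sum_counit_smul_right ra]

lemma opR_opGr (ξ : A →ₗ[R] A) : opR (opGr ξ) = ξ := by
  apply LinearMap.ext; intro a
  set ra := ℛ R a
  set rx : ∀ i, Coalgebra.Repr R (ra.left i) (A × A) := fun i => ℛ R (ra.left i)
  set ry : ∀ i, Coalgebra.Repr R (ra.right i) (A × A) := fun i => ℛ R (ra.right i)
  have key := congrArg (mul₃ ξ (antipode (R := R)) (LinearMap.id))
    (Coalgebra.sum_tmul_tmul_eq ra rx ry)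
  simp only [map_sum, mul₃_tmul, LinearMap.id_coe, id_eq] at key
  calc opR (opGr ξ) a
      = ∑ i ∈ ra.index, opGr ξ (ra.left i) * ra.right i := opR_repr _ ra
    _ = ∑ i ∈ ra.index, ∑ k ∈ (rx i).index,
          ξ ((rx i).left k) * (antipode (R := R) ((rx i).right k) * ra.right i) := by
        refine Finset.sum_congr rfl fun i _ => ?_
        rw [opGr_repr ξ (rx i), Finset.sum_mul]
        exact Finset.sum_congr rfl fun k _ => mul_assoc _ _ _
    _ = ∑ i ∈ ra.index, ∑ k ∈ (ry i).index,
          ξ (ra.left i) * (antipode (R := R) ((ry i).left k) * (ry i).right k) := key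
    _ = ∑ i ∈ ra.index, counit (R := R) (ra.right i) • ξ (ra.left i) := by
        refine Finset.sum_congr rfl fun i _ => ?_
        rw [← Finset.mul_sum, HopfAlgebra.sum_antipode_mul_eq_smul (ry i), mul_smul_comm, mul_one]
    _ = ξ (∑ i ∈ ra.index, counit (R := R) (ra.right i) • ra.left i) := by
        rw [map_sum]
        exact Finset.sum_congr rfl fun i _ => (map_smul ξ _ _).symm
    _ = ξ a := by rw [repr_sum_counit_smul_left ra]

lemma opGr_opR (g : A →ₗ[R] A) : opGr (opR g) = g := by
  apply LinearMap.ext; intro a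
  set ra := ℛ R a
  set rx : ∀ i, Coalgebra.Repr R (ra.left i) (A × A) := fun i => ℛ R (ra.left i)
  set ry : ∀ i, Coalgebra.Repr R (ra.right i) (A × A) := fun i => ℛ R (ra.right i)
  have key := congrArg (mul₃ g (LinearMap.id) (antipode (R := R)))
    (Coalgebra.sum_tmul_tmul_eq ra rx ry)
  simp only [map_sum, mul₃_tmul, LinearMap.id_coe, id_eq] at key
  calc opGr (opR g) a
      = ∑ i ∈ ra.index, opR g (ra.left i) * antipode (R := R) (ra.right i) := opGr_repr _ ra
    _ = ∑ i ∈ ra.index, ∑ k ∈ (rx i).index,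
          g ((rx i).left k) * ((rx i).right k * antipode (R := R) (ra.right i)) := by
        refine Finset.sum_congr rfl fun i _ => ?_
        rw [opR_repr g (rx i), Finset.sum_mul]
        exact Finset.sum_congr rfl fun k _ => mul_assoc _ _ _
    _ = ∑ i ∈ ra.index, ∑ k ∈ (ry i).index,
          g (ra.left i) * ((ry i).left k * antipode (R := R) ((ry i).right k)) := key
    _ = ∑ i ∈ ra.index, counit (R := R) (ra.right i) • g (ra.left i) := by
        refine Finset.sum_congr rfl fun i _ => ?_
        rw [← Finset.mul_sum, HopfAlgebra.sum_mul_antipode_eq_smul (ry i), mul_smul_comm, mul_one]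
    _ = g (∑ i ∈ ra.index, counit (R := R) (ra.right i) • ra.left i) := by
        rw [map_sum]
        exact Finset.sum_congr rfl fun i _ => (map_smul g _ _).symm
    _ = g a := by rw [repr_sum_counit_smul_left ra]


lemma opL_alg_repr (ψ : A →ₗ[R] R) {ι : Type*} {a : A} (ra : Coalgebra.Repr R a ι) :
    opL (Algebra.linearMap R A ∘ₗ ψ) a = ∑ i ∈ ra.index, ψ (ra.right i) • ra.left i := by
  rw [opL_repr _ ra]
  refine Finset.sum_congr rfl fun i _ => ?_
  rw [LinearMap.comp_apply, Algebra.linearMap_apply, mul_comm]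
  exact (Algebra.smul_def _ _).symm

lemma opR_alg_repr (ψ : A →ₗ[R] R) {ι : Type*} {a : A} (ra : Coalgebra.Repr R a ι) :
    opR (Algebra.linearMap R A ∘ₗ ψ) a = ∑ i ∈ ra.index, ψ (ra.left i) • ra.right i := by
  rw [opR_repr _ ra]
  refine Finset.sum_congr rfl fun i _ => ?_
  rw [LinearMap.comp_apply, Algebra.linearMap_apply]
  exact (Algebra.smul_def _ _).symm

lemma leibniz_term₁ (p q u v : A) (r s : R) :
    (p * q) * (r • u + s • v) = (r • p) * (q * u) + (s • q) * (p * v) := by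
  rw [mul_add, mul_smul_comm, mul_smul_comm, smul_mul_assoc, smul_mul_assoc]
  congr 1
  · congr 1; ring
  · congr 1; ring

lemma opL_leibniz (g : A →ₗ[R] A)
    (hg : ∀ x y : A, g (x * y) = counit (R := R) x • g y + counit (R := R) y • g x)
    (x y : A) : opL g (x * y) = x * opL g y + y * opL g x := by
  set rp := ℛ R x with hrp
  set rq := ℛ R y with hrq
  have e1 : x * opL g y = ∑ i ∈ rp.index, ∑ j ∈ rq.index,
      (counit (R := R) (rp.right i) • rp.left i) * (rq.left j * g (rq.right j)) := by
    rw [← Finset.sum_mul_sum]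
    rw [repr_sum_counit_smul_left rp, ← opL_repr g rq]
  have e2 : y * opL g x = ∑ i ∈ rp.index, ∑ j ∈ rq.index,
      (counit (R := R) (rq.right j) • rq.left j) * (rp.left i * g (rp.right i)) := by
    rw [Finset.sum_comm, ← Finset.sum_mul_sum]
    rw [repr_sum_counit_smul_left rq, ← opL_repr g rp]
  calc opL g (x * y)
      = ∑ i ∈ rp.index, ∑ j ∈ rq.index,
          (rp.left i * rq.left j) * g (rp.right i * rq.right j) := by
        rw [opL_repr g (reprMul rp rq)]
        simp only [reprMul]
        rw [Finset.sum_product]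
    _ = ∑ i ∈ rp.index, ∑ j ∈ rq.index,
          ((counit (R := R) (rp.right i) • rp.left i) * (rq.left j * g (rq.right j)) +
            (counit (R := R) (rq.right j) • rq.left j) * (rp.left i * g (rp.right i))) := by
        refine Finset.sum_congr rfl fun i _ => Finset.sum_congr rfl fun j _ => ?_
        rw [hg, leibniz_term₁]
    _ = x * opL g y + y * opL g x := by
        rw [e1, e2, ← Finset.sum_add_distrib]
        refine Finset.sum_congr rfl fun i _ => ?_
        rw [← Finset.sum_add_distrib]

lemma opR_leibniz (g : A →ₗ[R] A)
    (hg : ∀ x y : A, g (x * y) = counit (R := R) x • g y + counit (R := R) y • g x)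
    (x y : A) : opR g (x * y) = x * opR g y + y * opR g x := by
  set rp := ℛ R x with hrp
  set rq := ℛ R y with hrq
  have e1 : x * opR g y = ∑ i ∈ rp.index, ∑ j ∈ rq.index,
      (counit (R := R) (rp.left i) • rp.right i) * (g (rq.left j) * rq.right j) := by
    rw [← Finset.sum_mul_sum]
    rw [repr_sum_counit_smul_right rp, ← opR_repr g rq]
  have e2 : y * opR g x = ∑ i ∈ rp.index, ∑ j ∈ rq.index,
      (counit (R := R) (rq.left j) • rq.right j) * (g (rp.left i) * rp.right i) := by
    rw [Finset.sum_comm, ← Finset.sum_mul_sum]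
    rw [repr_sum_counit_smul_right rq, ← opR_repr g rp]
  calc opR g (x * y)
      = ∑ i ∈ rp.index, ∑ j ∈ rq.index,
          g (rp.left i * rq.left j) * (rp.right i * rq.right j) := by
        rw [opR_repr g (reprMul rp rq)]
        simp only [reprMul]
        rw [Finset.sum_product]
    _ = ∑ i ∈ rp.index, ∑ j ∈ rq.index,
          ((counit (R := R) (rp.left i) • rp.right i) * (g (rq.left j) * rq.right j) +
            (counit (R := R) (rq.left j) • rq.right j) * (g (rp.left i) * rp.right i)) := by
        refine Finset.sum_congr rfl fun i _ => Finset.sum_congr rfl fun j _ => ?_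
        rw [hg]
        rw [add_mul, smul_mul_assoc, smul_mul_assoc, smul_mul_assoc, smul_mul_assoc]
        congr 1
        · congr 1; ring
        · congr 1; ring
    _ = x * opR g y + y * opR g x := by
        rw [e1, e2, ← Finset.sum_add_distrib]
        refine Finset.sum_congr rfl fun i _ => ?_
        rw [← Finset.sum_add_distrib]

/-- `p ⊗ (q ⊗ r) ↦ ψ(r) • (p ⊗ q)`. -/
def contractR (ψ : A →ₗ[R] R) : A ⊗[R] (A ⊗[R] A) →ₗ[R] A ⊗[R] A :=
  (TensorProduct.rid R (A ⊗[R] A)).toLinearMap ∘ₗ ψ.lTensor (A ⊗[R] A) ∘ₗ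
    (TensorProduct.assoc R A A A).symm.toLinearMap

@[simp] lemma contractR_tmul (ψ : A →ₗ[R] R) (p q r : A) :
    contractR ψ (p ⊗ₜ (q ⊗ₜ r)) = ψ r • (p ⊗ₜ[R] q) := by
  simp [contractR]

/-- `p ⊗ (q ⊗ r) ↦ ψ(p) • (q ⊗ r)`. -/
def contractL (ψ : A →ₗ[R] R) : A ⊗[R] (A ⊗[R] A) →ₗ[R] A ⊗[R] A :=
  (TensorProduct.lid R (A ⊗[R] A)).toLinearMap ∘ₗ ψ.rTensor (A ⊗[R] A)

@[simp] lemma contractL_tmul (ψ : A →ₗ[R] R) (p q r : A) :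
    contractL ψ (p ⊗ₜ (q ⊗ₜ r)) = ψ p • (q ⊗ₜ[R] r) := by
  simp [contractL]

lemma opL_leftInvariant (ψ : A →ₗ[R] R) :
    Coalgebra.comul ∘ₗ opL (Algebra.linearMap R A ∘ₗ ψ)
      = (opL (Algebra.linearMap R A ∘ₗ ψ)).lTensor A ∘ₗ Coalgebra.comul := by
  apply LinearMap.ext; intro a
  set ra := ℛ R a
  set rx : ∀ i, Coalgebra.Repr R (ra.left i) (A × A) := fun i => ℛ R (ra.left i)
  set ry : ∀ i, Coalgebra.Repr R (ra.right i) (A × A) := fun i => ℛ R (ra.right i)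
  have key := congrArg (contractR ψ) (Coalgebra.sum_tmul_tmul_eq ra rx ry)
  simp only [map_sum, contractR_tmul] at key
  calc (Coalgebra.comul ∘ₗ opL (Algebra.linearMap R A ∘ₗ ψ)) a
      = Coalgebra.comul (∑ i ∈ ra.index, ψ (ra.right i) • ra.left i) := by
        rw [LinearMap.comp_apply, opL_alg_repr ψ ra]
    _ = ∑ i ∈ ra.index, ∑ k ∈ (rx i).index,
          ψ (ra.right i) • ((rx i).left k ⊗ₜ[R] (rx i).right k) := by
        rw [map_sum]
        refine Finset.sum_congr rfl fun i _ => ?_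
        rw [map_smul, ← (rx i).eq, Finset.smul_sum]
    _ = ∑ i ∈ ra.index, ∑ k ∈ (ry i).index,
          ψ ((ry i).right k) • (ra.left i ⊗ₜ[R] (ry i).left k) := key
    _ = ∑ i ∈ ra.index, ra.left i ⊗ₜ[R]
          (∑ k ∈ (ry i).index, ψ ((ry i).right k) • (ry i).left k) := by
        refine Finset.sum_congr rfl fun i _ => ?_
        rw [TensorProduct.tmul_sum]
        exact Finset.sum_congr rfl fun k _ => (TensorProduct.tmul_smul _ _ _).symm
    _ = ((opL (Algebra.linearMap R A ∘ₗ ψ)).lTensor A ∘ₗ Coalgebra.comul) a := by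
        rw [LinearMap.comp_apply, ← ra.eq, map_sum]
        refine Finset.sum_congr rfl fun i _ => ?_
        rw [LinearMap.lTensor_tmul, opL_alg_repr ψ (ry i)]

lemma opR_rightInvariant (ψ : A →ₗ[R] R) :
    Coalgebra.comul ∘ₗ opR (Algebra.linearMap R A ∘ₗ ψ)
      = (opR (Algebra.linearMap R A ∘ₗ ψ)).rTensor A ∘ₗ Coalgebra.comul := by
  apply LinearMap.ext; intro a
  set ra := ℛ R a
  set rx : ∀ i, Coalgebra.Repr R (ra.left i) (A × A) := fun i => ℛ R (ra.left i)
  set ry : ∀ i, Coalgebra.Repr R (ra.right i) (A × A) := fun i => ℛ R (ra.right i)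
  have key := congrArg (contractL ψ) (Coalgebra.sum_tmul_tmul_eq ra rx ry)
  simp only [map_sum, contractL_tmul] at key
  calc (Coalgebra.comul ∘ₗ opR (Algebra.linearMap R A ∘ₗ ψ)) a
      = Coalgebra.comul (∑ i ∈ ra.index, ψ (ra.left i) • ra.right i) := by
        rw [LinearMap.comp_apply, opR_alg_repr ψ ra]
    _ = ∑ i ∈ ra.index, ∑ k ∈ (ry i).index,
          ψ (ra.left i) • ((ry i).left k ⊗ₜ[R] (ry i).right k) := by
        rw [map_sum]
        refine Finset.sum_congr rfl fun i _ => ?_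
        rw [map_smul, ← (ry i).eq, Finset.smul_sum]
    _ = ∑ i ∈ ra.index, ∑ k ∈ (rx i).index,
          ψ ((rx i).left k) • ((rx i).right k ⊗ₜ[R] ra.right i) := key.symm
    _ = ∑ i ∈ ra.index,
          (∑ k ∈ (rx i).index, ψ ((rx i).left k) • (rx i).right k) ⊗ₜ[R] ra.right i := by
        refine Finset.sum_congr rfl fun i _ => ?_
        rw [TensorProduct.sum_tmul]
        exact Finset.sum_congr rfl fun k _ => (TensorProduct.smul_tmul' _ _ _)
    _ = ((opR (Algebra.linearMap R A ∘ₗ ψ)).rTensor A ∘ₗ Coalgebra.comul) a := by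
        rw [LinearMap.comp_apply, ← ra.eq, map_sum]
        refine Finset.sum_congr rfl fun i _ => ?_
        rw [LinearMap.rTensor_tmul, opR_alg_repr ψ (rx i)]

lemma opL_counit_comp (ξ : A →ₗ[R] A)
    (hξ : Coalgebra.comul ∘ₗ ξ = ξ.lTensor A ∘ₗ Coalgebra.comul) :
    opL (Algebra.linearMap R A ∘ₗ (Coalgebra.counit ∘ₗ ξ)) = ξ := by
  apply LinearMap.ext; intro a
  set ra := ℛ R a
  have h2 : ∑ i ∈ ra.index, ra.left i ⊗ₜ[R] ξ (ra.right i) = Coalgebra.comul (ξ a) := by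
    calc ∑ i ∈ ra.index, ra.left i ⊗ₜ[R] ξ (ra.right i)
        = ξ.lTensor A (∑ i ∈ ra.index, ra.left i ⊗ₜ[R] ra.right i) := by
          rw [map_sum]
          exact Finset.sum_congr rfl fun i _ => (LinearMap.lTensor_tmul _ _ _ _).symm
      _ = ξ.lTensor A (Coalgebra.comul a) := by rw [ra.eq]
      _ = Coalgebra.comul (ξ a) := (LinearMap.congr_fun hξ a).symm
  have h3 := congrArg (fun z => (TensorProduct.rid R A)
      ((Coalgebra.counit (R := R) (A := A)).lTensor A z)) h2
  simp only [map_sum, LinearMap.lTensor_tmul, TensorProduct.rid_tmul,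
    Coalgebra.lTensor_counit_comul, one_smul] at h3
  rw [opL_alg_repr _ ra]
  exact h3

lemma opR_counit_comp (ξ : A →ₗ[R] A)
    (hξ : Coalgebra.comul ∘ₗ ξ = ξ.rTensor A ∘ₗ Coalgebra.comul) :
    opR (Algebra.linearMap R A ∘ₗ (Coalgebra.counit ∘ₗ ξ)) = ξ := by
  apply LinearMap.ext; intro a
  set ra := ℛ R a
  have h2 : ∑ i ∈ ra.index, ξ (ra.left i) ⊗ₜ[R] ra.right i = Coalgebra.comul (ξ a) := by
    calc ∑ i ∈ ra.index, ξ (ra.left i) ⊗ₜ[R] ra.right i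
        = ξ.rTensor A (∑ i ∈ ra.index, ra.left i ⊗ₜ[R] ra.right i) := by
          rw [map_sum]
          exact Finset.sum_congr rfl fun i _ => (LinearMap.rTensor_tmul _ _ _ _).symm
      _ = ξ.rTensor A (Coalgebra.comul a) := by rw [ra.eq]
      _ = Coalgebra.comul (ξ a) := (LinearMap.congr_fun hξ a).symm
  have h3 := congrArg (fun z => (TensorProduct.lid R A)
      ((Coalgebra.counit (R := R) (A := A)).rTensor A z)) h2
  simp only [map_sum, LinearMap.rTensor_tmul, TensorProduct.lid_tmul,
    Coalgebra.rTensor_counit_comul, one_smul] at h3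
  rw [opR_alg_repr _ ra]
  exact h3

lemma counit_comp_opL (ψ : A →ₗ[R] R) (a : A) :
    Coalgebra.counit (R := R) (opL (Algebra.linearMap R A ∘ₗ ψ) a) = ψ a := by
  set ra := ℛ R a
  rw [opL_alg_repr ψ ra, map_sum]
  calc ∑ i ∈ ra.index, Coalgebra.counit (R := R) (ψ (ra.right i) • ra.left i)
      = ψ (∑ i ∈ ra.index, Coalgebra.counit (R := R) (ra.left i) • ra.right i) := by
        rw [map_sum]
        refine Finset.sum_congr rfl fun i _ => ?_
        rw [map_smul, map_smul, smul_eq_mul, smul_eq_mul, mul_comm]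
    _ = ψ a := by rw [repr_sum_counit_smul_right ra]

lemma counit_comp_opR (ψ : A →ₗ[R] R) (a : A) :
    Coalgebra.counit (R := R) (opR (Algebra.linearMap R A ∘ₗ ψ) a) = ψ a := by
  set ra := ℛ R a
  rw [opR_alg_repr ψ ra, map_sum]
  calc ∑ i ∈ ra.index, Coalgebra.counit (R := R) (ψ (ra.left i) • ra.right i)
      = ψ (∑ i ∈ ra.index, Coalgebra.counit (R := R) (ra.right i) • ra.left i) := by
        rw [map_sum]
        refine Finset.sum_congr rfl fun i _ => ?_
        rw [map_smul, map_smul, smul_eq_mul, smul_eq_mul, mul_comm]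
    _ = ψ a := by rw [repr_sum_counit_smul_left ra]

lemma opL_mulLeft (c : A) (g : A →ₗ[R] A) :
    opL (LinearMap.mulLeft R c ∘ₗ g) = c • opL g := by
  apply LinearMap.ext; intro a
  set ra := ℛ R a
  rw [LinearMap.smul_apply, opL_repr _ ra, opL_repr g ra, smul_eq_mul, Finset.mul_sum]
  refine Finset.sum_congr rfl fun i _ => ?_
  rw [LinearMap.comp_apply, LinearMap.mulLeft_apply]
  ring

lemma opR_mulLeft (c : A) (g : A →ₗ[R] A) :
    opR (LinearMap.mulLeft R c ∘ₗ g) = c • opR g := by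
  apply LinearMap.ext; intro a
  set ra := ℛ R a
  rw [LinearMap.smul_apply, opR_repr _ ra, opR_repr g ra, smul_eq_mul, Finset.mul_sum]
  refine Finset.sum_congr rfl fun i _ => ?_
  rw [LinearMap.comp_apply, LinearMap.mulLeft_apply]
  ring

lemma opGl_eps_der (ξ : A →ₗ[R] A)
    (hξ : ∀ x y : A, ξ (x * y) = x * ξ y + y * ξ x) (x y : A) :
    opGl ξ (x * y) = counit (R := R) x • opGl ξ y + counit (R := R) y • opGl ξ x := by
  set rp := ℛ R x with hrp
  set rq := ℛ R y with hrq
  calc opGl ξ (x * y)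
      = ∑ i ∈ rp.index, ∑ j ∈ rq.index,
          antipode (R := R) (rp.left i * rq.left j) * ξ (rp.right i * rq.right j) := by
        rw [opGl_repr ξ (reprMul rp rq)]
        simp only [reprMul]
        rw [Finset.sum_product]
    _ = ∑ i ∈ rp.index, ∑ j ∈ rq.index,
          ((antipode (R := R) (rp.left i) * rp.right i) *
              (antipode (R := R) (rq.left j) * ξ (rq.right j)) +
            (antipode (R := R) (rp.left i) * ξ (rp.right i)) *
              (antipode (R := R) (rq.left j) * rq.right j)) := by
        refine Finset.sum_congr rfl fun i _ => Finset.sum_congr rfl fun j _ => ?_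
        rw [antipode_mul, hξ]
        ring
    _ = (∑ i ∈ rp.index, antipode (R := R) (rp.left i) * rp.right i) *
          (∑ j ∈ rq.index, antipode (R := R) (rq.left j) * ξ (rq.right j)) +
        (∑ i ∈ rp.index, antipode (R := R) (rp.left i) * ξ (rp.right i)) *
          (∑ j ∈ rq.index, antipode (R := R) (rq.left j) * rq.right j) := by
        rw [Finset.sum_mul_sum, Finset.sum_mul_sum, ← Finset.sum_add_distrib]
        refine Finset.sum_congr rfl fun i _ => ?_
        rw [← Finset.sum_add_distrib]
    _ = counit (R := R) x • opGl ξ y + counit (R := R) y • opGl ξ x := by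
        rw [HopfAlgebra.sum_antipode_mul_eq_smul rp, HopfAlgebra.sum_antipode_mul_eq_smul rq,
          ← opGl_repr ξ rq, ← opGl_repr ξ rp, smul_mul_assoc, one_mul, mul_smul_comm, mul_one]

lemma opGr_eps_der (ξ : A →ₗ[R] A)
    (hξ : ∀ x y : A, ξ (x * y) = x * ξ y + y * ξ x) (x y : A) :
    opGr ξ (x * y) = counit (R := R) x • opGr ξ y + counit (R := R) y • opGr ξ x := by
  set rp := ℛ R x with hrp
  set rq := ℛ R y with hrq
  calc opGr ξ (x * y)
      = ∑ i ∈ rp.index, ∑ j ∈ rq.index,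
          ξ (rp.left i * rq.left j) * antipode (R := R) (rp.right i * rq.right j) := by
        rw [opGr_repr ξ (reprMul rp rq)]
        simp only [reprMul]
        rw [Finset.sum_product]
    _ = ∑ i ∈ rp.index, ∑ j ∈ rq.index,
          ((rp.left i * antipode (R := R) (rp.right i)) *
              (ξ (rq.left j) * antipode (R := R) (rq.right j)) +
            (ξ (rp.left i) * antipode (R := R) (rp.right i)) *
              (rq.left j * antipode (R := R) (rq.right j))) := by
        refine Finset.sum_congr rfl fun i _ => Finset.sum_congr rfl fun j _ => ?_
        rw [antipode_mul, hξ]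
        ring
    _ = (∑ i ∈ rp.index, rp.left i * antipode (R := R) (rp.right i)) *
          (∑ j ∈ rq.index, ξ (rq.left j) * antipode (R := R) (rq.right j)) +
        (∑ i ∈ rp.index, ξ (rp.left i) * antipode (R := R) (rp.right i)) *
          (∑ j ∈ rq.index, rq.left j * antipode (R := R) (rq.right j)) := by
        rw [Finset.sum_mul_sum, Finset.sum_mul_sum, ← Finset.sum_add_distrib]
        refine Finset.sum_congr rfl fun i _ => ?_
        rw [← Finset.sum_add_distrib]
    _ = counit (R := R) x • opGr ξ y + counit (R := R) y • opGr ξ x := by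
        rw [HopfAlgebra.sum_mul_antipode_eq_smul rp, HopfAlgebra.sum_mul_antipode_eq_smul rq,
          ← opGr_repr ξ rq, ← opGr_repr ξ rp, smul_mul_assoc, one_mul, mul_smul_comm, mul_one]

section Cotangent

/-- The augmentation ideal. -/
abbrev augI : Ideal A := RingHom.ker (Bialgebra.counitAlgHom R A)

lemma counitAlgHom_apply' (a : A) :
    Bialgebra.counitAlgHom R A a = Coalgebra.counit (R := R) a := rfl

lemma counit_of_mem_augI {a : A} (ha : a ∈ augI (R := R) (A := A)) :
    Coalgebra.counit (R := R) a = 0 := by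
  rw [← counitAlgHom_apply']
  exact RingHom.mem_ker.mp ha

lemma sub_mem_augI (a : A) :
    a - algebraMap R A (Coalgebra.counit (R := R) a) ∈ augI (R := R) (A := A) := by
  rw [RingHom.mem_ker]
  simp only [map_sub, AlgHom.commutes, counitAlgHom_apply']
  exact sub_self _

/-- `a ↦ a - ε(a)·1` as a map into the augmentation ideal. -/
def nuFun : A →ₗ[R] ↥(augI (R := R) (A := A)) where
  toFun a := ⟨a - algebraMap R A (Coalgebra.counit (R := R) a), sub_mem_augI a⟩
  map_add' a b := by
    ext
    simp only [map_add, Submodule.coe_add]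
    ring
  map_smul' r a := by
    ext
    simp only [map_smul, RingHom.id_apply, SetLike.val_smul_of_tower]
    rw [smul_sub, smul_eq_mul, map_mul, ← Algebra.smul_def]

@[simp] lemma nuFun_coe (a : A) :
    (nuFun (R := R) (A := A) a : A) = a - algebraMap R A (Coalgebra.counit (R := R) a) := rfl

/-- `a ↦ [a - ε(a)·1] ∈ I/I²`. -/
def piTilde : A →ₗ[R] (augI (R := R) (A := A)).Cotangent :=
  ((augI (R := R) (A := A)).toCotangent.restrictScalars R) ∘ₗ nuFun

lemma piTilde_apply (a : A) :
    piTilde (R := R) (A := A) a = (augI (R := R) (A := A)).toCotangent (nuFun a) := rfl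

lemma piTilde_coe (v : ↥(augI (R := R) (A := A))) :
    piTilde (R := R) (A := A) (v : A) = (augI (R := R) (A := A)).toCotangent v := by
  rw [piTilde_apply]
  congr 1
  ext
  simp [counit_of_mem_augI v.2]

lemma piTilde_eps_der (x y : A) :
    piTilde (R := R) (A := A) (x * y)
      = Coalgebra.counit (R := R) x • piTilde (R := R) (A := A) y
        + Coalgebra.counit (R := R) y • piTilde (R := R) (A := A) x := by
  have hmem : ((nuFun (x * y) - (Coalgebra.counit (R := R) x • nuFun y
      + Coalgebra.counit (R := R) y • nuFun x) : ↥(augI (R := R) (A := A))) : A)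
      ∈ (augI (R := R) (A := A)) ^ 2 := by
    have hco : ((nuFun (x * y) - (Coalgebra.counit (R := R) x • nuFun y
        + Coalgebra.counit (R := R) y • nuFun x) : ↥(augI (R := R) (A := A))) : A)
        = (x - algebraMap R A (Coalgebra.counit (R := R) x)) *
          (y - algebraMap R A (Coalgebra.counit (R := R) y)) := by
      simp only [Submodule.coe_sub, Submodule.coe_add, SetLike.val_smul_of_tower, nuFun_coe,
        Bialgebra.counit_mul, map_mul, Algebra.smul_def]
      ring
    rw [hco, pow_two]
    exact Ideal.mul_mem_mul (sub_mem_augI x) (sub_mem_augI y)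
  have h0 : (augI (R := R) (A := A)).toCotangent (nuFun (x * y)
      - (Coalgebra.counit (R := R) x • nuFun y + Coalgebra.counit (R := R) y • nuFun x)) = 0 :=
    (Ideal.toCotangent_eq_zero _ _).mpr hmem
  have := congrArg ((augI (R := R) (A := A)).toCotangent.restrictScalars R)
    (sub_add_cancel (nuFun (x * y))
      (Coalgebra.counit (R := R) x • nuFun y + Coalgebra.counit (R := R) y • nuFun x)).symm
  rw [map_add] at this
  calc piTilde (R := R) (A := A) (x * y)
      = ((augI (R := R) (A := A)).toCotangent.restrictScalars R) (nuFun (x * y)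
          - (Coalgebra.counit (R := R) x • nuFun y + Coalgebra.counit (R := R) y • nuFun x))
        + ((augI (R := R) (A := A)).toCotangent.restrictScalars R)
            (Coalgebra.counit (R := R) x • nuFun y
              + Coalgebra.counit (R := R) y • nuFun x) := this
    _ = Coalgebra.counit (R := R) x • piTilde (R := R) (A := A) y
        + Coalgebra.counit (R := R) y • piTilde (R := R) (A := A) x := by
        rw [show ((augI (R := R) (A := A)).toCotangent.restrictScalars R) (nuFun (x * y)
          - (Coalgebra.counit (R := R) x • nuFun y + Coalgebra.counit (R := R) y • nuFun x))
          = 0 from h0, zero_add, map_add, map_smul, map_smul]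
        rfl

variable {N : Type*} [AddCommGroup N] [Module R N]

/-- Lift an `ε`-derivation `A → N` to a map `I/I² → N`. -/
def cotangentLift (f : A →ₗ[R] N)
    (hf : ∀ x y : A, f (x * y) = Coalgebra.counit (R := R) x • f y
      + Coalgebra.counit (R := R) y • f x) :
    (augI (R := R) (A := A)).Cotangent →ₗ[R] N :=
  (Submodule.liftQ
    ((augI (R := R) (A := A) • (⊤ : Submodule A ↥(augI (R := R) (A := A)))).restrictScalars R)
    (f ∘ₗ ((augI (R := R) (A := A)).subtype.restrictScalars R))
    (by
      intro v hv
      rw [Submodule.restrictScalars_mem] at hv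
      refine Submodule.smul_induction_on hv (fun r hr n _ => ?_) (fun x y hx hy => ?_)
      · rw [LinearMap.mem_ker]
        have h0 : f ((r : A) * (n : A)) = 0 := by
          rw [hf, counit_of_mem_augI hr, counit_of_mem_augI n.2, zero_smul, zero_smul, add_zero]
        simpa using h0
      · rw [LinearMap.mem_ker] at hx hy ⊢
        rw [map_add, hx, hy, add_zero])) ∘ₗ
  (Submodule.Quotient.restrictScalarsEquiv R
    (augI (R := R) (A := A) • (⊤ : Submodule A ↥(augI (R := R) (A := A))))).symm.toLinearMap

lemma cotangentLift_toCotangent (f : A →ₗ[R] N)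
    (hf : ∀ x y : A, f (x * y) = Coalgebra.counit (R := R) x • f y
      + Coalgebra.counit (R := R) y • f x) (v : ↥(augI (R := R) (A := A))) :
    cotangentLift f hf ((augI (R := R) (A := A)).toCotangent v) = f (v : A) := by
  rfl

lemma cotangentLift_piTilde (f : A →ₗ[R] N)
    (hf : ∀ x y : A, f (x * y) = Coalgebra.counit (R := R) x • f y
      + Coalgebra.counit (R := R) y • f x) (a : A) :
    cotangentLift f hf (piTilde (R := R) (A := A) a) = f a := by
  have hf1 : f 1 = 0 := by
    have := hf 1 1
    rw [mul_one, Bialgebra.counit_one, one_smul] at this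
    exact (left_eq_add.mp this)
  rw [piTilde_apply, cotangentLift_toCotangent, nuFun_coe, map_sub]
  have : f (algebraMap R A (Coalgebra.counit (R := R) a)) = 0 := by
    rw [Algebra.algebraMap_eq_smul_one, map_smul, hf1, smul_zero]
  rw [this, sub_zero]

lemma piTilde_epi {φ φ' : (augI (R := R) (A := A)).Cotangent →ₗ[R] N}
    (h : ∀ a : A, φ (piTilde (R := R) (A := A) a) = φ' (piTilde (R := R) (A := A) a)) :
    φ = φ' := by
  apply LinearMap.ext
  intro m
  obtain ⟨v, rfl⟩ := Ideal.toCotangent_surjective _ m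
  rw [← piTilde_coe v]
  exact h v

end Cotangent

section DualTensor

variable {R : Type*} [CommRing R] {M : Type*} [AddCommGroup M] [Module R M]
variable {A : Type*} [CommRing A] [Algebra R A]

lemma exists_dual_basis [Module.Finite R M] [Module.Projective R M] :
    ∃ (n : ℕ) (p : (Fin n → R) →ₗ[R] M) (s : M →ₗ[R] (Fin n → R)),
      p ∘ₗ s = LinearMap.id := by
  obtain ⟨n, g, hg⟩ := Module.Finite.exists_fin (R := R) (M := M)
  set p : (Fin n → R) →ₗ[R] M :=
    ∑ k : Fin n, (LinearMap.proj k : (Fin n → R) →ₗ[R] R).smulRight (g k) with hp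
  have hpe : ∀ k, p (Pi.single k 1) = g k := by
    intro k
    rw [hp]
    simp only [LinearMap.coe_sum, Finset.sum_apply, LinearMap.smulRight_apply,
      LinearMap.proj_apply]
    rw [Finset.sum_eq_single k]
    · simp
    · intro j _ hj
      simp [Pi.single_apply, hj]
    · simp
  have hsur : Function.Surjective p := by
    rw [← LinearMap.range_eq_top, ← top_le_iff, ← hg, Submodule.span_le]
    rintro _ ⟨k, rfl⟩
    exact ⟨Pi.single k 1, hpe k⟩
  obtain ⟨s, hs⟩ := Module.projective_lifting_property p LinearMap.id hsur
  exact ⟨n, p, s, hs⟩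

/-- `a ⊗ φ ↦ (m ↦ φ(m) • a)`. -/
def dualTensor : A ⊗[R] (M →ₗ[R] R) →ₗ[R] (M →ₗ[R] A) :=
  TensorProduct.lift
    { toFun := fun a =>
        { toFun := fun φ => LinearMap.smulRight φ a
          map_add' := fun φ ψ => by ext m; simp [add_smul]
          map_smul' := fun r φ => by ext m; simp [mul_smul] }
      map_add' := fun a b => by ext φ m; simp [smul_add]
      map_smul' := fun r a => by ext φ m; simp [smul_comm _ r] }

@[simp] lemma dualTensor_tmul (a : A) (φ : M →ₗ[R] R) (m : M) :
    dualTensor (a ⊗ₜ φ) m = φ m • a := rfl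

lemma dualTensor_bijective [Module.Finite R M] [Module.Projective R M] :
    Function.Bijective (dualTensor (R := R) (M := M) (A := A)) := by
  obtain ⟨n, p, s, hps⟩ := exists_dual_basis (R := R) (M := M)
  have hps' : ∀ m, p (s m) = m := fun m => LinearMap.congr_fun hps m
  set inv : (M →ₗ[R] A) →ₗ[R] A ⊗[R] (M →ₗ[R] R) :=
    { toFun := fun F => ∑ k : Fin n, F (p (Pi.single k 1)) ⊗ₜ[R]
        ((LinearMap.proj k : (Fin n → R) →ₗ[R] R) ∘ₗ s)
      map_add' := fun F G => by
        simp only [LinearMap.add_apply, TensorProduct.add_tmul]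
        rw [Finset.sum_add_distrib]
      map_smul' := fun r F => by
        simp only [LinearMap.smul_apply, RingHom.id_apply]
        rw [Finset.smul_sum]
        exact Finset.sum_congr rfl fun k _ => (TensorProduct.smul_tmul' r _ _).symm } with hinv
  have hsingle : ∀ (v : Fin n → R),
      ∑ k : Fin n, v k • (Pi.single k (1 : R) : Fin n → R) = v := by
    intro v
    have h : ∀ k, v k • (Pi.single k (1 : R) : Fin n → R) = Pi.single k (v k) := by
      intro k
      rw [← Pi.single_smul, smul_eq_mul, mul_one]
    simp_rw [h]
    exact Finset.univ_sum_single v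
  have collectR : ∀ (φ : M →ₗ[R] R) (m : M),
      ∑ k : Fin n, s m k • φ (p (Pi.single k 1)) = φ m := by
    intro φ m
    calc ∑ k : Fin n, s m k • φ (p (Pi.single k 1))
        = φ (p (∑ k : Fin n, s m k • (Pi.single k (1 : R) : Fin n → R))) := by
          rw [map_sum, map_sum]
          refine Finset.sum_congr rfl fun k _ => ?_
          rw [map_smul, map_smul]
      _ = φ m := by rw [hsingle, hps']
  have collect : ∀ (φ : M →ₗ[R] A) (m : M),
      ∑ k : Fin n, s m k • φ (p (Pi.single k 1)) = φ m := by
    intro φ m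
    calc ∑ k : Fin n, s m k • φ (p (Pi.single k 1))
        = φ (p (∑ k : Fin n, s m k • (Pi.single k (1 : R) : Fin n → R))) := by
          rw [map_sum, map_sum]
          refine Finset.sum_congr rfl fun k _ => ?_
          rw [map_smul, map_smul]
      _ = φ m := by rw [hsingle, hps']
  constructor
  · have hleft : inv ∘ₗ dualTensor (R := R) (M := M) (A := A) = LinearMap.id := by
      apply TensorProduct.ext'
      intro a φ
      have h1 : (inv ∘ₗ dualTensor (R := R) (M := M) (A := A)) (a ⊗ₜ φ)
          = ∑ k : Fin n, (φ (p (Pi.single k 1)) • a) ⊗ₜ[R]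
              ((LinearMap.proj k : (Fin n → R) →ₗ[R] R) ∘ₗ s) := by
        simp only [LinearMap.comp_apply, hinv, LinearMap.coe_mk, AddHom.coe_mk, dualTensor_tmul]
      rw [h1]
      calc ∑ k : Fin n, (φ (p (Pi.single k 1)) • a) ⊗ₜ[R]
              ((LinearMap.proj k : (Fin n → R) →ₗ[R] R) ∘ₗ s)
          = a ⊗ₜ[R] (∑ k : Fin n, φ (p (Pi.single k 1)) •
              ((LinearMap.proj k : (Fin n → R) →ₗ[R] R) ∘ₗ s)) := by
            rw [TensorProduct.tmul_sum]
            exact Finset.sum_congr rfl fun k _ => TensorProduct.smul_tmul _ _ _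
        _ = a ⊗ₜ[R] φ := by
            congr 1
            apply LinearMap.ext
            intro m
            simp only [LinearMap.coe_sum, Finset.sum_apply, LinearMap.smul_apply,
              LinearMap.comp_apply, LinearMap.proj_apply, smul_eq_mul]
            calc ∑ k : Fin n, φ (p (Pi.single k 1)) * s m k
                = ∑ k : Fin n, s m k • φ (p (Pi.single k 1)) := by
                  refine Finset.sum_congr rfl fun k _ => ?_
                  rw [smul_eq_mul, mul_comm]
              _ = φ m := collectR φ m
        _ = LinearMap.id (R := R) (M := A ⊗[R] (M →ₗ[R] R)) (a ⊗ₜ[R] φ) := rfl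
    intro x y hxy
    have h2 := congrArg inv hxy
    calc x = (inv ∘ₗ dualTensor (R := R) (M := M) (A := A)) x := by rw [hleft]; rfl
      _ = (inv ∘ₗ dualTensor (R := R) (M := M) (A := A)) y := by
          simp only [LinearMap.comp_apply, h2]
      _ = y := by rw [hleft]; rfl
  · intro F
    refine ⟨inv F, ?_⟩
    apply LinearMap.ext
    intro m
    have h1 : dualTensor (R := R) (M := M) (A := A) (inv F) m
        = ∑ k : Fin n, s m k • F (p (Pi.single k 1)) := by
      simp only [hinv, LinearMap.coe_mk, AddHom.coe_mk, map_sum, LinearMap.coe_sum,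
        Finset.sum_apply, dualTensor_tmul, LinearMap.comp_apply, LinearMap.proj_apply]
    rw [h1, collect]

end DualTensor

section Assembly

variable {R A : Type*} [CommRing R] [CommRing A] [HopfAlgebra R A]

lemma comp_piTilde_eps_der {N : Type*} [AddCommGroup N] [Module R N]
    (φ : (augI (R := R) (A := A)).Cotangent →ₗ[R] N) (x y : A) :
    (φ ∘ₗ piTilde (R := R) (A := A)) (x * y)
      = Coalgebra.counit (R := R) x • (φ ∘ₗ piTilde (R := R) (A := A)) y
        + Coalgebra.counit (R := R) y • (φ ∘ₗ piTilde (R := R) (A := A)) x := by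
  simp only [LinearMap.comp_apply, piTilde_eps_der x y, map_add, map_smul]

lemma opR_add (g h : A →ₗ[R] A) : opR (g + h) = opR g + opR h := by
  unfold opR
  rw [LinearMap.rTensor_add, LinearMap.add_comp, LinearMap.comp_add]

lemma opR_smul (r : R) (g : A →ₗ[R] A) : opR (r • g) = r • opR g := by
  unfold opR
  rw [LinearMap.rTensor_smul, LinearMap.smul_comp, LinearMap.comp_smul]

lemma opL_add (g h : A →ₗ[R] A) : opL (g + h) = opL g + opL h := by
  unfold opL
  rw [LinearMap.lTensor_add, LinearMap.add_comp, LinearMap.comp_add]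

lemma opL_smul (r : R) (g : A →ₗ[R] A) : opL (r • g) = r • opL g := by
  unfold opL
  rw [LinearMap.lTensor_smul, LinearMap.smul_comp, LinearMap.comp_smul]

/-- The `R`-linear map `Hom(I/I², A) → Der_R(A)`, `φ ↦ (a ↦ Σ φ(π(a₁)) a₂)`. -/
def PhiR : ((augI (R := R) (A := A)).Cotangent →ₗ[R] A) →ₗ[R] Derivation R A A where
  toFun φ := Derivation.mk' (opR (φ ∘ₗ piTilde (R := R) (A := A))) (fun x y => by
    rw [smul_eq_mul, smul_eq_mul]
    exact opR_leibniz _ (comp_piTilde_eps_der φ) x y)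
  map_add' φ ψ := by
    apply Derivation.ext
    intro a
    simp only [Derivation.coe_mk', Derivation.add_apply]
    rw [LinearMap.add_comp, opR_add]
    rfl
  map_smul' r φ := by
    apply Derivation.ext
    intro a
    simp only [Derivation.coe_mk', RingHom.id_apply, Derivation.smul_apply]
    rw [LinearMap.smul_comp, opR_smul]
    rfl

/-- The `R`-linear map `Hom(I/I², A) → Der_R(A)`, `φ ↦ (a ↦ Σ a₁ φ(π(a₂)))`. -/
def PhiL : ((augI (R := R) (A := A)).Cotangent →ₗ[R] A) →ₗ[R] Derivation R A A where
  toFun φ := Derivation.mk' (opL (φ ∘ₗ piTilde (R := R) (A := A))) (fun x y => by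
    rw [smul_eq_mul, smul_eq_mul]
    exact opL_leibniz _ (comp_piTilde_eps_der φ) x y)
  map_add' φ ψ := by
    apply Derivation.ext
    intro a
    simp only [Derivation.coe_mk', Derivation.add_apply]
    rw [LinearMap.add_comp, opL_add]
    rfl
  map_smul' r φ := by
    apply Derivation.ext
    intro a
    simp only [Derivation.coe_mk', RingHom.id_apply, Derivation.smul_apply]
    rw [LinearMap.smul_comp, opL_smul]
    rfl

@[simp] lemma PhiR_apply (φ : (augI (R := R) (A := A)).Cotangent →ₗ[R] A) (a : A) :
    PhiR φ a = opR (φ ∘ₗ piTilde (R := R) (A := A)) a := rfl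

@[simp] lemma PhiL_apply (φ : (augI (R := R) (A := A)).Cotangent →ₗ[R] A) (a : A) :
    PhiL φ a = opL (φ ∘ₗ piTilde (R := R) (A := A)) a := rfl

lemma PhiR_bijective : Function.Bijective (PhiR (R := R) (A := A)) := by
  constructor
  · intro φ ψ h
    have h1 : opR (φ ∘ₗ piTilde (R := R) (A := A)) = opR (ψ ∘ₗ piTilde (R := R) (A := A)) :=
      LinearMap.ext fun a => by
        have := congrArg (fun D : Derivation R A A => D a) h
        simpa using this
    have h2 := congrArg opGr h1
    rw [opGr_opR, opGr_opR] at h2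
    exact piTilde_epi fun a => LinearMap.congr_fun h2 a
  · intro ξ
    have hder : ∀ x y : A, (ξ : A →ₗ[R] A) (x * y)
        = x * (ξ : A →ₗ[R] A) y + y * (ξ : A →ₗ[R] A) x := fun x y => by
      simpa [smul_eq_mul] using ξ.leibniz x y
    have hg := opGr_eps_der (ξ : A →ₗ[R] A) hder
    refine ⟨cotangentLift (opGr (ξ : A →ₗ[R] A)) hg, ?_⟩
    apply Derivation.ext
    intro a
    have hcomp : cotangentLift (opGr (ξ : A →ₗ[R] A)) hg ∘ₗ piTilde (R := R) (A := A)
        = opGr (ξ : A →ₗ[R] A) := LinearMap.ext fun b => cotangentLift_piTilde _ hg b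
    rw [PhiR_apply, hcomp, opR_opGr]
    rfl

lemma PhiL_bijective : Function.Bijective (PhiL (R := R) (A := A)) := by
  constructor
  · intro φ ψ h
    have h1 : opL (φ ∘ₗ piTilde (R := R) (A := A)) = opL (ψ ∘ₗ piTilde (R := R) (A := A)) :=
      LinearMap.ext fun a => by
        have := congrArg (fun D : Derivation R A A => D a) h
        simpa using this
    have h2 := congrArg opGl h1
    rw [opGl_opL, opGl_opL] at h2
    exact piTilde_epi fun a => LinearMap.congr_fun h2 a
  · intro ξ
    have hder : ∀ x y : A, (ξ : A →ₗ[R] A) (x * y)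
        = x * (ξ : A →ₗ[R] A) y + y * (ξ : A →ₗ[R] A) x := fun x y => by
      simpa [smul_eq_mul] using ξ.leibniz x y
    have hg := opGl_eps_der (ξ : A →ₗ[R] A) hder
    refine ⟨cotangentLift (opGl (ξ : A →ₗ[R] A)) hg, ?_⟩
    apply Derivation.ext
    intro a
    have hcomp : cotangentLift (opGl (ξ : A →ₗ[R] A)) hg ∘ₗ piTilde (R := R) (A := A)
        = opGl (ξ : A →ₗ[R] A) := LinearMap.ext fun b => cotangentLift_piTilde _ hg b
    rw [PhiL_apply, hcomp, opL_opGl]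
    rfl

end Assembly

end Statement4Aux

variable (R A : Type*) [CommRing R] [CommRing A] [HopfAlgebra R A]


namespace Statement4Aux

/-- `φ ↦` the right-invariant derivation `a ↦ Σ φ(π(a₁)) a₂`. -/
def eRlin : ((augI (R := R) (A := A)).Cotangent →ₗ[R] R) →ₗ[R]
    ↥(rightInvariantDerivations R A) where
  toFun φ :=
    ⟨Derivation.mk' (opR (Algebra.linearMap R A ∘ₗ (φ ∘ₗ piTilde (R := R) (A := A))))
      (fun x y => by
        rw [smul_eq_mul, smul_eq_mul]
        refine opR_leibniz _ (fun u v => ?_) x y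
        have hcp := comp_piTilde_eps_der φ u v
        simp only [LinearMap.comp_apply] at hcp ⊢
        rw [hcp, map_add, map_smul, map_smul]),
      by
        have h := opR_rightInvariant (φ ∘ₗ piTilde (R := R) (A := A))
        exact h⟩
  map_add' φ ψ := by
    apply Subtype.ext
    apply Derivation.ext
    intro a
    have : opR (Algebra.linearMap R A ∘ₗ ((φ + ψ) ∘ₗ piTilde (R := R) (A := A)))
        = opR (Algebra.linearMap R A ∘ₗ (φ ∘ₗ piTilde (R := R) (A := A)))
          + opR (Algebra.linearMap R A ∘ₗ (ψ ∘ₗ piTilde (R := R) (A := A))) := by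
      rw [LinearMap.add_comp, LinearMap.comp_add, opR_add]
    simp only [Derivation.coe_mk', Submodule.coe_add, Derivation.add_apply, this,
      LinearMap.add_apply]
  map_smul' r φ := by
    apply Subtype.ext
    apply Derivation.ext
    intro a
    have : opR (Algebra.linearMap R A ∘ₗ ((r • φ) ∘ₗ piTilde (R := R) (A := A)))
        = r • opR (Algebra.linearMap R A ∘ₗ (φ ∘ₗ piTilde (R := R) (A := A))) := by
      rw [LinearMap.smul_comp, LinearMap.comp_smul, opR_smul]
    simp only [Derivation.coe_mk', RingHom.id_apply, SetLike.val_smul, Derivation.smul_apply,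
      this, LinearMap.smul_apply]

/-- `φ ↦` the left-invariant derivation `a ↦ Σ a₁ φ(π(a₂))`. -/
def eLlin : ((augI (R := R) (A := A)).Cotangent →ₗ[R] R) →ₗ[R]
    ↥(leftInvariantDerivations R A) where
  toFun φ :=
    ⟨Derivation.mk' (opL (Algebra.linearMap R A ∘ₗ (φ ∘ₗ piTilde (R := R) (A := A))))
      (fun x y => by
        rw [smul_eq_mul, smul_eq_mul]
        refine opL_leibniz _ (fun u v => ?_) x y
        have hcp := comp_piTilde_eps_der φ u v
        simp only [LinearMap.comp_apply] at hcp ⊢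
        rw [hcp, map_add, map_smul, map_smul]),
      by
        have h := opL_leftInvariant (φ ∘ₗ piTilde (R := R) (A := A))
        exact h⟩
  map_add' φ ψ := by
    apply Subtype.ext
    apply Derivation.ext
    intro a
    have : opL (Algebra.linearMap R A ∘ₗ ((φ + ψ) ∘ₗ piTilde (R := R) (A := A)))
        = opL (Algebra.linearMap R A ∘ₗ (φ ∘ₗ piTilde (R := R) (A := A)))
          + opL (Algebra.linearMap R A ∘ₗ (ψ ∘ₗ piTilde (R := R) (A := A))) := by
      rw [LinearMap.add_comp, LinearMap.comp_add, opL_add]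
    simp only [Derivation.coe_mk', Submodule.coe_add, Derivation.add_apply, this,
      LinearMap.add_apply]
  map_smul' r φ := by
    apply Subtype.ext
    apply Derivation.ext
    intro a
    have : opL (Algebra.linearMap R A ∘ₗ ((r • φ) ∘ₗ piTilde (R := R) (A := A)))
        = r • opL (Algebra.linearMap R A ∘ₗ (φ ∘ₗ piTilde (R := R) (A := A))) := by
      rw [LinearMap.smul_comp, LinearMap.comp_smul, opL_smul]
    simp only [Derivation.coe_mk', RingHom.id_apply, SetLike.val_smul, Derivation.smul_apply,
      this, LinearMap.smul_apply]

lemma eRlin_bijective : Function.Bijective (eRlin R A) := by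
  constructor
  · intro φ ψ h
    refine piTilde_epi fun a => ?_
    have h1 := congrArg (fun D : ↥(rightInvariantDerivations R A) =>
      Coalgebra.counit (R := R) ((D : Derivation R A A) a)) h
    simpa only [eRlin, LinearMap.coe_mk, AddHom.coe_mk, Derivation.coe_mk',
      counit_comp_opR (φ ∘ₗ piTilde (R := R) (A := A)) a,
      counit_comp_opR (ψ ∘ₗ piTilde (R := R) (A := A)) a, LinearMap.comp_apply] using h1
  · intro ξ
    have hmem : Coalgebra.comul ∘ₗ ((ξ : Derivation R A A) : A →ₗ[R] A)
        = ((ξ : Derivation R A A) : A →ₗ[R] A).rTensor A ∘ₗ Coalgebra.comul := ξ.2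
    have hψ : ∀ x y : A, (Coalgebra.counit ∘ₗ ((ξ : Derivation R A A) : A →ₗ[R] A)) (x * y)
        = Coalgebra.counit (R := R) x •
            (Coalgebra.counit ∘ₗ ((ξ : Derivation R A A) : A →ₗ[R] A)) y
          + Coalgebra.counit (R := R) y •
            (Coalgebra.counit ∘ₗ ((ξ : Derivation R A A) : A →ₗ[R] A)) x := by
      intro x y
      have hl := (ξ : Derivation R A A).leibniz x y
      simp only [LinearMap.comp_apply, Derivation.coeFn_coe]
      rw [hl, map_add, smul_eq_mul, smul_eq_mul, smul_eq_mul, smul_eq_mul,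
        Bialgebra.counit_mul, Bialgebra.counit_mul]
    refine ⟨cotangentLift (Coalgebra.counit ∘ₗ ((ξ : Derivation R A A) : A →ₗ[R] A)) hψ, ?_⟩
    apply Subtype.ext
    apply Derivation.ext
    intro a
    have hlift : cotangentLift (Coalgebra.counit ∘ₗ ((ξ : Derivation R A A) : A →ₗ[R] A)) hψ
          ∘ₗ piTilde (R := R) (A := A)
        = Coalgebra.counit ∘ₗ ((ξ : Derivation R A A) : A →ₗ[R] A) :=
      LinearMap.ext fun b => cotangentLift_piTilde _ hψ b
    show opR (Algebra.linearMap R A ∘ₗ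
      (cotangentLift (Coalgebra.counit ∘ₗ ((ξ : Derivation R A A) : A →ₗ[R] A)) hψ
        ∘ₗ piTilde (R := R) (A := A))) a = (ξ : Derivation R A A) a
    rw [hlift, opR_counit_comp _ hmem]
    rfl

lemma eLlin_bijective : Function.Bijective (eLlin R A) := by
  constructor
  · intro φ ψ h
    refine piTilde_epi fun a => ?_
    have h1 := congrArg (fun D : ↥(leftInvariantDerivations R A) =>
      Coalgebra.counit (R := R) ((D : Derivation R A A) a)) h
    simpa only [eLlin, LinearMap.coe_mk, AddHom.coe_mk, Derivation.coe_mk',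
      counit_comp_opL (φ ∘ₗ piTilde (R := R) (A := A)) a,
      counit_comp_opL (ψ ∘ₗ piTilde (R := R) (A := A)) a, LinearMap.comp_apply] using h1
  · intro ξ
    have hmem : Coalgebra.comul ∘ₗ ((ξ : Derivation R A A) : A →ₗ[R] A)
        = ((ξ : Derivation R A A) : A →ₗ[R] A).lTensor A ∘ₗ Coalgebra.comul := ξ.2
    have hψ : ∀ x y : A, (Coalgebra.counit ∘ₗ ((ξ : Derivation R A A) : A →ₗ[R] A)) (x * y)
        = Coalgebra.counit (R := R) x •
            (Coalgebra.counit ∘ₗ ((ξ : Derivation R A A) : A →ₗ[R] A)) y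
          + Coalgebra.counit (R := R) y •
            (Coalgebra.counit ∘ₗ ((ξ : Derivation R A A) : A →ₗ[R] A)) x := by
      intro x y
      have hl := (ξ : Derivation R A A).leibniz x y
      simp only [LinearMap.comp_apply, Derivation.coeFn_coe]
      rw [hl, map_add, smul_eq_mul, smul_eq_mul, smul_eq_mul, smul_eq_mul,
        Bialgebra.counit_mul, Bialgebra.counit_mul]
    refine ⟨cotangentLift (Coalgebra.counit ∘ₗ ((ξ : Derivation R A A) : A →ₗ[R] A)) hψ, ?_⟩
    apply Subtype.ext
    apply Derivation.ext
    intro a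
    have hlift : cotangentLift (Coalgebra.counit ∘ₗ ((ξ : Derivation R A A) : A →ₗ[R] A)) hψ
          ∘ₗ piTilde (R := R) (A := A)
        = Coalgebra.counit ∘ₗ ((ξ : Derivation R A A) : A →ₗ[R] A) :=
      LinearMap.ext fun b => cotangentLift_piTilde _ hψ b
    show opL (Algebra.linearMap R A ∘ₗ
      (cotangentLift (Coalgebra.counit ∘ₗ ((ξ : Derivation R A A) : A →ₗ[R] A)) hψ
        ∘ₗ piTilde (R := R) (A := A))) a = (ξ : Derivation R A A) a
    rw [hlift, opL_counit_comp _ hmem]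
    rfl

theorem main_right [Module.Finite R (augI (R := R) (A := A)).Cotangent]
    [Module.Projective R (augI (R := R) (A := A)).Cotangent] :
    Function.Bijective (derivationSMulLift R A (rightInvariantDerivations R A)) := by
  set e := LinearEquiv.ofBijective (eRlin R A) (eRlin_bijective R A) with he
  set Θ := TensorProduct.congr (LinearEquiv.refl R A) e with hΘ
  have hsq : (derivationSMulLift R A (rightInvariantDerivations R A)) ∘ₗ (Θ : _ →ₗ[R] _)
      = (PhiR (R := R) (A := A)) ∘ₗ dualTensor := by
    apply TensorProduct.ext'
    intro a φ
    simp only [LinearMap.comp_apply, LinearEquiv.coe_coe, hΘ, TensorProduct.congr_tmul,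
      LinearEquiv.refl_apply, he, LinearEquiv.ofBijective_apply]
    apply Derivation.ext
    intro x
    have hclaim : dualTensor (a ⊗ₜ[R] φ) ∘ₗ piTilde (R := R) (A := A)
        = LinearMap.mulLeft R a ∘ₗ
            (Algebra.linearMap R A ∘ₗ (φ ∘ₗ piTilde (R := R) (A := A))) := by
      apply LinearMap.ext
      intro z
      simp only [LinearMap.comp_apply, dualTensor_tmul, LinearMap.mulLeft_apply,
        Algebra.linearMap_apply]
      rw [Algebra.smul_def, mul_comm]
    calc (derivationSMulLift R A (rightInvariantDerivations R A)) (a ⊗ₜ[R] eRlin R A φ) x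
        = a • ((eRlin R A φ : Derivation R A A) x) := rfl
      _ = a • (opR (Algebra.linearMap R A ∘ₗ (φ ∘ₗ piTilde (R := R) (A := A))) x) := rfl
      _ = PhiR (dualTensor (a ⊗ₜ[R] φ)) x := by
          rw [PhiR_apply, hclaim, opR_mulLeft]
          rfl
  have hbij2 : Function.Bijective
      (⇑(PhiR (R := R) (A := A)) ∘ ⇑(dualTensor (R := R) (M := (augI (R := R) (A := A)).Cotangent) (A := A))) :=
    (PhiR_bijective).comp (dualTensor_bijective)
  have hfun : ⇑(derivationSMulLift R A (rightInvariantDerivations R A))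
      = (⇑(PhiR (R := R) (A := A)) ∘ ⇑(dualTensor (R := R) (M := (augI (R := R) (A := A)).Cotangent) (A := A))) ∘ ⇑Θ.symm := by
    funext z
    have h := LinearMap.congr_fun hsq (Θ.symm z)
    simp only [LinearMap.comp_apply, LinearEquiv.coe_coe, LinearEquiv.apply_symm_apply] at h
    exact h
  rw [hfun]
  exact hbij2.comp Θ.symm.bijective

theorem main_left [Module.Finite R (augI (R := R) (A := A)).Cotangent]
    [Module.Projective R (augI (R := R) (A := A)).Cotangent] :
    Function.Bijective (derivationSMulLift R A (leftInvariantDerivations R A)) := by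
  set e := LinearEquiv.ofBijective (eLlin R A) (eLlin_bijective R A) with he
  set Θ := TensorProduct.congr (LinearEquiv.refl R A) e with hΘ
  have hsq : (derivationSMulLift R A (leftInvariantDerivations R A)) ∘ₗ (Θ : _ →ₗ[R] _)
      = (PhiL (R := R) (A := A)) ∘ₗ dualTensor := by
    apply TensorProduct.ext'
    intro a φ
    simp only [LinearMap.comp_apply, LinearEquiv.coe_coe, hΘ, TensorProduct.congr_tmul,
      LinearEquiv.refl_apply, he, LinearEquiv.ofBijective_apply]
    apply Derivation.ext
    intro x
    have hclaim : dualTensor (a ⊗ₜ[R] φ) ∘ₗ piTilde (R := R) (A := A)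
        = LinearMap.mulLeft R a ∘ₗ
            (Algebra.linearMap R A ∘ₗ (φ ∘ₗ piTilde (R := R) (A := A))) := by
      apply LinearMap.ext
      intro z
      simp only [LinearMap.comp_apply, dualTensor_tmul, LinearMap.mulLeft_apply,
        Algebra.linearMap_apply]
      rw [Algebra.smul_def, mul_comm]
    calc (derivationSMulLift R A (leftInvariantDerivations R A)) (a ⊗ₜ[R] eLlin R A φ) x
        = a • ((eLlin R A φ : Derivation R A A) x) := rfl
      _ = a • (opL (Algebra.linearMap R A ∘ₗ (φ ∘ₗ piTilde (R := R) (A := A))) x) := rfl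
      _ = PhiL (dualTensor (a ⊗ₜ[R] φ)) x := by
          rw [PhiL_apply, hclaim, opL_mulLeft]
          rfl
  have hbij2 : Function.Bijective
      (⇑(PhiL (R := R) (A := A)) ∘ ⇑(dualTensor (R := R) (M := (augI (R := R) (A := A)).Cotangent) (A := A))) :=
    (PhiL_bijective).comp (dualTensor_bijective)
  have hfun : ⇑(derivationSMulLift R A (leftInvariantDerivations R A))
      = (⇑(PhiL (R := R) (A := A)) ∘ ⇑(dualTensor (R := R) (M := (augI (R := R) (A := A)).Cotangent) (A := A))) ∘ ⇑Θ.symm := by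
    funext z
    have h := LinearMap.congr_fun hsq (Θ.symm z)
    simp only [LinearMap.comp_apply, LinearEquiv.coe_coe, LinearEquiv.apply_symm_apply] at h
    exact h
  rw [hfun]
  exact hbij2.comp Θ.symm.bijective

end Statement4Aux

/-- **Theorem (cf. Ardakov, Proposition "InvVectFldsGenerate").**
Let `A` be a commutative Hopf algebra over a commutative ring `R` which is infinitesimally
flat, i.e. `I/I²` is a finitely generated projective `R`-module where `I = ker ε` is the
augmentation ideal.  Then the canonical `A`-linear maps
`A ⊗_R 𝔇_r → Der_R(A)` and `A ⊗_R 𝔇_l → Der_R(A)`, `(a, ξ) ↦ a·ξ`, are bijective, where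
`𝔇_r` (resp. `𝔇_l`) denotes the `R`-module of right- (resp. left-) invariant derivations. -/
theorem statement4
    (hfin : Module.Finite R (RingHom.ker (Bialgebra.counitAlgHom R A)).Cotangent)
    (hproj : Module.Projective R (RingHom.ker (Bialgebra.counitAlgHom R A)).Cotangent) :
    Function.Bijective (derivationSMulLift R A (rightInvariantDerivations R A)) ∧
      Function.Bijective (derivationSMulLift R A (leftInvariantDerivations R A)) := by
  haveI := hfin
  haveI := hproj
  exact ⟨Statement4Aux.main_right R A, Statement4Aux.main_left R A⟩

end
end

section
/- Let p be a prime number and set ε := 1 if p is odd and ε := 2 if p = 2. Let n and j be integers with n ≥ 1 and 1 ≤ j ≤ p^n − 1. Then p^n · v_p(C(p^n, j)) ≥ ε·j, where v_p denotes the p-adic valuation on the natural numbers and C(p^n, j) the binomial coefficient; moreover, equality holds if and only if p = 2 and j = 2^{n−1}. -/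
lemma padicValNat_choose_prime_pow_aux {p : ℕ} (hp : p.Prime) {n j : ℕ} (hjn : j ≤ p ^ n)
    (hj0 : j ≠ 0) : padicValNat p ((p ^ n).choose j) = n - padicValNat p j := by
  haveI : Fact p.Prime := ⟨hp⟩
  have h1 := hp.emultiplicity_choose_prime_pow hjn hj0
  rw [← padicValNat_eq_emultiplicity (Nat.choose_pos hjn).ne'] at h1
  rw [padicValNat_def' hp.ne_one hj0]
  exact_mod_cast h1

/-- **Theorem (cf. Ardakov, Lemma "PadicBinomVals").**
Let `p` be a prime, and set `ε := 1` if `p` is odd and `ε := 2` if `p = 2`.  Let `n, j` be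
integers with `n ≥ 1` and `1 ≤ j ≤ p^n − 1`.  Then `p^n · v_p(C(p^n, j)) ≥ ε·j`, with
equality if and only if `p = 2` and `j = 2^{n−1}`. -/
theorem statement7 (p : ℕ) (hp : p.Prime) (n j : ℕ) (hn : 1 ≤ n)
    (hj : 1 ≤ j) (hj' : j ≤ p ^ n - 1) :
    (if p = 2 then 2 else 1) * j ≤ p ^ n * padicValNat p ((p ^ n).choose j) ∧
      (p ^ n * padicValNat p ((p ^ n).choose j) = (if p = 2 then 2 else 1) * j ↔
        p = 2 ∧ j = 2 ^ (n - 1)) := by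
  haveI : Fact p.Prime := ⟨hp⟩
  have hp1 : 1 < p := hp.one_lt
  have hpn1 : 1 ≤ p ^ n := Nat.one_le_pow _ _ (by omega)
  have hjlt : j < p ^ n := by omega
  have hkey : padicValNat p ((p ^ n).choose j) = n - padicValNat p j :=
    padicValNat_choose_prime_pow_aux hp hjlt.le (by omega)
  set a := padicValNat p j with ha_def
  have hdvd : p ^ a ∣ j := pow_padicValNat_dvd
  have haltn : a < n := by
    by_contra h
    have : p ^ n ∣ j := (pow_dvd_pow p (by omega)).trans hdvd
    exact absurd (Nat.le_of_dvd (by omega) this) (by omega)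
  rw [hkey]
  by_cases hcase : p = 2 ∧ j = 2 ^ (n - 1)
  · obtain ⟨hp2, hj2⟩ := hcase
    subst hp2 hj2
    have ha : a = n - 1 := by rw [ha_def, padicValNat.prime_pow]
    rw [ha]
    have hnn : n - (n - 1) = 1 := by omega
    rw [hnn]
    have : (2:ℕ) ^ n = 2 * 2 ^ (n - 1) := by
      rw [← pow_succ']
      congr 1
      omega
    simp [this]
  · -- strict inequality
    have hstrict : (if p = 2 then 2 else 1) * j < p ^ n * (n - a) := by
      by_cases ha : a = n - 1
      · -- j = p^(n-1) * m, m < p, m ≥ 1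
        rw [ha]
        have hnn : n - (n - 1) = 1 := by omega
        rw [hnn, mul_one]
        by_cases hp2 : p = 2
        · -- then j must be 2^(n-1), contradiction
          exfalso
          subst hp2
          rw [ha] at hdvd
          obtain ⟨m, hm⟩ := hdvd
          have h2n : (2:ℕ) ^ n = 2 ^ (n - 1) * 2 := by
            rw [← pow_succ]; congr 1; omega
          rw [hm, h2n] at hjlt
          have hmlt : m < 2 := Nat.lt_of_mul_lt_mul_left hjlt
          have hm1 : m = 1 := by
            have hm0 : m ≠ 0 := by
              rintro rfl
              rw [mul_zero] at hm
              omega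
            omega
          exact hcase ⟨rfl, by rw [hm, hm1, mul_one]⟩
        · simp only [hp2, if_false, one_mul]
          exact hjlt
      · -- a ≤ n - 2, so n - a ≥ 2
        have h2 : 2 ≤ n - a := by omega
        have heps : (if p = 2 then 2 else 1) ≤ 2 := by split <;> omega
        calc (if p = 2 then 2 else 1) * j ≤ 2 * j := Nat.mul_le_mul_right _ heps
          _ < 2 * p ^ n := by omega
          _ = p ^ n * 2 := by ring
          _ ≤ p ^ n * (n - a) := Nat.mul_le_mul_left _ h2
    refine ⟨hstrict.le, ?_, fun h => absurd h hcase⟩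
    intro h
    omega
end

section
/- Let S be a ring with an action of a group G by ring automorphisms, and suppose the action admits a trivialisation β : G → Sˣ (so β is a group homomorphism with β(g)·s·β(g)⁻¹ = g•s for all g ∈ G and s ∈ S). Let (T, i, γ) be a skew group ring for this action, i.e. i : S → T is a ring homomorphism and γ : G → Tˣ a group homomorphism with γ(g)·i(s)·γ(g)⁻¹ = i(g•s) for all g, s, such that T is free as a left S-module (via i) with basis (γ(g))_{g∈G}. Then there is a ring isomorphism from the group ring MonoidAlgebra S G onto T which sends the element s·g (for s ∈ S and g ∈ G) to i(s·β(g)⁻¹)·γ(g); in particular, the skew group ring S ⋊ G is isomorphic as a ring to the ordinary group ring S[G]. -/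
/-- **Theorem (cf. Ardakov, Lemma "Untwist").**
Let `S` be a ring with an action of a group `G` by ring automorphisms admitting a
trivialisation `β : G → Sˣ` (a group homomorphism with `β(g)·s·β(g)⁻¹ = g • s` for all
`g, s`).  Let `(T, i, γ)` be a skew group ring for this action: `i : S → T` is a ring
homomorphism, `γ : G → Tˣ` a group homomorphism with `γ(g)·i(s)·γ(g)⁻¹ = i(g • s)`, and every
element of `T` is uniquely a finite sum `Σ_g i(s_g)·γ(g)` (i.e. `T` is free as a left
`S`-module via `i` with basis `(γ(g))_{g ∈ G}`).  Then there is a ring isomorphism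
`S[G] ≅ T` sending `s·g` to `i(s·β(g)⁻¹)·γ(g)`; in particular the skew group ring `S ⋊ G`
is isomorphic to the ordinary group ring `S[G]`. -/
theorem statement12
    (S : Type*) [Ring S] (G : Type*) [Group G] [MulSemiringAction G S]
    (β : G →* Sˣ) (hβ : ∀ (g : G) (s : S), (β g : S) * s * ((β g)⁻¹ : Sˣ) = g • s)
    (T : Type*) [Ring T] (i : S →+* T) (γ : G →* Tˣ)
    (hγ : ∀ (g : G) (s : S), (γ g : T) * i s * ((γ g)⁻¹ : Tˣ) = i (g • s))
    (hbasis : ∀ t : T, ∃! c : G →₀ S, t = c.sum fun g s => i s * (γ g : T)) :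
    ∃ φ : MonoidAlgebra S G ≃+* T,
      ∀ (s : S) (g : G), φ (MonoidAlgebra.single g s) = i (s * ((β g)⁻¹ : Sˣ)) * (γ g : T) := by
  classical
  have hcomm : ∀ (g : G) (s : S), (γ g : T) * i s = i (g • s) * (γ g : T) := by
    intro g s
    have h := congrArg (· * (γ g : T)) (hγ g s)
    simpa [mul_assoc] using h
  -- The key computation in `S`
  have keyS : ∀ (g : G) (s : S),
      (((β g)⁻¹ : Sˣ) : S) * (g • s) = s * (((β g)⁻¹ : Sˣ) : S) := by
    intro g s
    rw [← hβ g, ← mul_assoc, ← mul_assoc, Units.inv_mul, one_mul]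
  -- the twisted group-like elements
  let δ : G →* T :=
  { toFun := fun g => i (((β g)⁻¹ : Sˣ) : S) * (γ g : T)
    map_one' := by simp
    map_mul' := by
      intro g h
      show i (((β (g * h))⁻¹ : Sˣ) : S) * (γ (g * h) : T)
          = (i (((β g)⁻¹ : Sˣ) : S) * (γ g : T)) * (i (((β h)⁻¹ : Sˣ) : S) * (γ h : T))
      have key : (((β g)⁻¹ : Sˣ) : S) * (g • (((β h)⁻¹ : Sˣ) : S))
          = (((β (g * h))⁻¹ : Sˣ) : S) := by
        rw [keyS, map_mul, mul_inv_rev, Units.val_mul]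
      calc i (((β (g * h))⁻¹ : Sˣ) : S) * (γ (g * h) : T)
          = i ((((β g)⁻¹ : Sˣ) : S) * (g • (((β h)⁻¹ : Sˣ) : S))) * ((γ g : T) * (γ h : T)) := by
            rw [key, map_mul γ, Units.val_mul]
        _ = i (((β g)⁻¹ : Sˣ) : S) * (i (g • (((β h)⁻¹ : Sˣ) : S)) * (γ g : T)) * (γ h : T) := by
            rw [map_mul i]; noncomm_ring
        _ = i (((β g)⁻¹ : Sˣ) : S) * ((γ g : T) * i (((β h)⁻¹ : Sˣ) : S)) * (γ h : T) := by
            rw [hcomm]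
        _ = (i (((β g)⁻¹ : Sˣ) : S) * (γ g : T)) * (i (((β h)⁻¹ : Sˣ) : S) * (γ h : T)) := by
            noncomm_ring }
  have hcommδ : ∀ (s : S) (g : G), Commute (i s) (δ g) := by
    intro s g
    show i s * (i (((β g)⁻¹ : Sˣ) : S) * (γ g : T))
        = (i (((β g)⁻¹ : Sˣ) : S) * (γ g : T)) * i s
    calc i s * (i (((β g)⁻¹ : Sˣ) : S) * (γ g : T))
        = i (s * (((β g)⁻¹ : Sˣ) : S)) * (γ g : T) := by rw [map_mul i, mul_assoc]
      _ = i ((((β g)⁻¹ : Sˣ) : S) * (g • s)) * (γ g : T) := by rw [keyS]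
      _ = i (((β g)⁻¹ : Sˣ) : S) * (i (g • s) * (γ g : T)) := by rw [map_mul i, mul_assoc]
      _ = (i (((β g)⁻¹ : Sˣ) : S) * (γ g : T)) * i s := by rw [← hcomm, mul_assoc]
  let φ₀ : MonoidAlgebra S G →+* T := MonoidAlgebra.liftNCRingHom i δ hcommδ
  have hsingle : ∀ (s : S) (g : G),
      φ₀ (MonoidAlgebra.single g s) = i (s * ((β g)⁻¹ : Sˣ)) * (γ g : T) := by
    intro s g
    show MonoidAlgebra.liftNC (i : S →+ T) δ (MonoidAlgebra.single g s)
        = i (s * ((β g)⁻¹ : Sˣ)) * (γ g : T)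
    rw [MonoidAlgebra.liftNC_single, map_mul i]
    show i s * (i (((β g)⁻¹ : Sˣ) : S) * (γ g : T)) = _
    rw [mul_assoc]
  have hsum : ∀ c : G →₀ S,
      φ₀ (MonoidAlgebra.ofCoeff c) = c.sum fun g s => i (s * ((β g)⁻¹ : Sˣ)) * (γ g : T) := by
    intro c
    conv_lhs => rw [← Finsupp.sum_single c]
    rw [MonoidAlgebra.ofCoeff_finsuppSum, map_finsuppSum]
    exact Finsupp.sum_congr fun g _ => hsingle _ g
  -- the pointwise multiplication-by-unit equivalence on finsupps
  let E : (G → Sˣ) → (G →₀ S) → (G →₀ S) := fun u c =>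
    ⟨c.support, fun g => c g * (u g : S), fun g => by
      simp [Finsupp.mem_support_iff, Units.mul_left_eq_zero]⟩
  let e : (G →₀ S) ≃ (G →₀ S) :=
  { toFun := E fun g => (β g)⁻¹
    invFun := E fun g => β g
    left_inv := by
      intro c
      ext g
      show c g * ((β g)⁻¹ : Sˣ) * (β g : S) = c g
      exact Units.inv_mul_cancel_right _ _
    right_inv := by
      intro c
      ext g
      show c g * (β g : S) * ((β g)⁻¹ : Sˣ) = c g
      exact Units.mul_inv_cancel_right _ _ }
  have hE : ∀ c : G →₀ S, φ₀ (MonoidAlgebra.ofCoeff c) = (e c).sum fun g s => i s * (γ g : T) := by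
    intro c
    rw [hsum]
    rfl
  have hbij : Function.Bijective φ₀ := by
    constructor
    · intro c₁ c₂ h
      have h2 : φ₀ c₁ = (e c₂.coeff).sum fun g s => i s * (γ g : T) := h ▸ hE c₂.coeff
      exact MonoidAlgebra.coeff_injective (e.injective ((hbasis (φ₀ c₁)).unique (hE c₁.coeff) h2))
    · intro t
      obtain ⟨c, hc, -⟩ := hbasis t
      refine ⟨MonoidAlgebra.ofCoeff (e.symm c), ?_⟩
      rw [hE, e.apply_symm_apply]
      exact hc.symm
  refine ⟨RingEquiv.ofBijective φ₀ hbij, fun s g => hsingle s g⟩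
end
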